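/- arXiv:math/0612337 — 3 statements merged into one kernel-verified Lean document; each statement's English description precedes it below -/
import Mathlib

section
/- Let κ, σ : [0,∞) → (0,∞) and α : [0,∞) → ℝ be continuous, let x_0 ∈ ℝ, and let W̃ be a standard Brownian motion. Set K(t) = ∫_0^t κ(u)du, let γ : [0,∞) → ℝ be the solution of γ'(t) = κ(t)(α(t) − γ(t)) with γ(0) = α(0), set s(t) = ∫_0^t exp(2K(u))·σ(u)² du with inverse function t(·), and define the time-dependent Ornstein-Uhlenbeck process X_t := γ(t) + e^{−K(t)}(x_0 − γ(0) + W̃_{s(t)}) (the solution of dX_t = κ(t)(α(t) − X_t)dt + σ(t)dW_t, X_0 = x_0). Then for any T > 0 and any functions a, b : [0,T] → ℝ with a(0) < x_0 < b(0), P(a(t) < X_t < b(t) for all t ∈ [0,T]) = P(c(s) < W̃_s < d(s) for all s ∈ [0,S]), where c(s) = γ(0) − x_0 + (a(t(s)) − γ(t(s)))·exp(K(t(s))), d(s) = γ(0) − x_0 + (b(t(s)) − γ(t(s)))·exp(K(t(s))), and S = s(T). -/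
open MeasureTheory ProbabilityTheory Filter Set

/-- A standard Brownian motion on `[0,∞)`: a process with (a.s.) continuous paths,
`W 0 = 0` a.s., centered Gaussian increments of variance `t - u`, and independent
increments. -/
structure IsStandardBM {Ω : Type*} [MeasureSpace Ω] (W : ℝ → Ω → ℝ) : Prop where
  meas : ∀ t : ℝ, Measurable (W t)
  init : ∀ᵐ ω : Ω ∂ℙ, W 0 ω = 0
  cont : ∀ᵐ ω : Ω ∂ℙ, ContinuousOn (fun t => W t ω) (Set.Ici 0)
  gauss_incr : ∀ u t : ℝ, 0 ≤ u → u ≤ t →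
    Measure.map (fun ω => W t ω - W u ω) ℙ = gaussianReal 0 (Real.toNNReal (t - u))
  indep_incr : ∀ (n : ℕ) (τ : Fin (n + 1) → ℝ), (∀ i, 0 ≤ τ i) → Monotone τ →
    iIndepFun (m := fun _ => Real.measurableSpace)
      (fun i : Fin n => fun ω => W (τ i.succ) ω - W (τ i.castSucc) ω) ℙ

private lemma bcp_aux (A g e w x0 g0 : ℝ) (he : 0 < e) :
    A < g + e⁻¹ * (x0 - g0 + w) ↔ g0 - x0 + (A - g) * e < w := by
  rw [← sub_lt_iff_lt_add', lt_inv_mul_iff₀ he]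
  constructor <;> intro h <;> nlinarith

private lemma bcp_aux2 (B g e w x0 g0 : ℝ) (he : 0 < e) :
    g + e⁻¹ * (x0 - g0 + w) < B ↔ w < g0 - x0 + (B - g) * e := by
  rw [← lt_sub_iff_add_lt', inv_mul_lt_iff₀ he]
  constructor <;> intro h <;> nlinarith

/-- Boundary crossing probabilities for the Ornstein-Uhlenbeck process with
time-dependent coefficients, reduced to boundary crossing probabilities for a
standard Brownian motion. -/
theorem bcp_ou_time_dependent
    {Ω : Type*} [MeasureSpace Ω] [IsProbabilityMeasure (ℙ : Measure Ω)]
    (κ σf α γ : ℝ → ℝ)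
    (hκ_cont : Continuous κ) (hκ_pos : ∀ t : ℝ, 0 < κ t)
    (hσ_cont : Continuous σf) (hσ_pos : ∀ t : ℝ, 0 < σf t)
    (hα_cont : Continuous α)
    (K : ℝ → ℝ) (hK : ∀ t : ℝ, K t = ∫ u in (0:ℝ)..t, κ u)
    (hγ : ∀ t : ℝ, 0 ≤ t → HasDerivAt γ (κ t * (α t - γ t)) t) (hγ0 : γ 0 = α 0)
    (s tinv : ℝ → ℝ)
    (hs : ∀ t : ℝ, s t = ∫ u in (0:ℝ)..t, Real.exp (2 * K u) * (σf u) ^ 2)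
    (htinv_left : ∀ t : ℝ, 0 ≤ t → tinv (s t) = t)
    (htinv_right : ∀ u : ℝ, 0 ≤ u → 0 ≤ tinv u ∧ s (tinv u) = u)
    (W : ℝ → Ω → ℝ) (hW : IsStandardBM W) (x₀ : ℝ)
    (X : ℝ → Ω → ℝ)
    (hX : ∀ (t : ℝ) (ω : Ω), X t ω = γ t + Real.exp (-K t) * (x₀ - γ 0 + W (s t) ω))
    (T : ℝ) (hT : 0 < T)
    (a b : ℝ → ℝ) (ha0 : a 0 < x₀) (hb0 : x₀ < b 0)
    (S : ℝ) (hS : S = s T) :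
    ℙ {ω : Ω | ∀ t ∈ Set.Icc (0 : ℝ) T, a t < X t ω ∧ X t ω < b t} =
      ℙ {ω : Ω | ∀ u ∈ Set.Icc (0 : ℝ) S,
        γ 0 - x₀ + (a (tinv u) - γ (tinv u)) * Real.exp (K (tinv u)) < W u ω ∧
        W u ω < γ 0 - x₀ + (b (tinv u) - γ (tinv u)) * Real.exp (K (tinv u))} := by
  have hK_cont : Continuous K := by
    have hK' : K = fun t => ∫ u in (0:ℝ)..t, κ u := funext hK
    rw [hK']
    exact continuous_iff_continuousAt.mpr fun t =>
      (intervalIntegral.integral_hasDerivAt_right (hκ_cont.intervalIntegrable 0 t)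
        (hκ_cont.stronglyMeasurableAtFilter _ _) hκ_cont.continuousAt).continuousAt
  set f : ℝ → ℝ := fun u => Real.exp (2 * K u) * (σf u) ^ 2 with hf
  have hf_cont : Continuous f :=
    ((continuous_const.mul hK_cont).rexp).mul (hσ_cont.pow 2)
  have hs' : s = fun t => ∫ u in (0:ℝ)..t, f u := funext hs
  have hsd : ∀ t : ℝ, HasDerivAt s (f t) t := by
    intro t
    rw [hs']
    exact intervalIntegral.integral_hasDerivAt_right (hf_cont.intervalIntegrable 0 t)
      (hf_cont.stronglyMeasurableAtFilter _ _) hf_cont.continuousAt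
  have hs_mono : StrictMono s := by
    apply strictMono_of_deriv_pos
    intro t
    rw [(hsd t).deriv]
    exact mul_pos (Real.exp_pos _) (pow_pos (hσ_pos t) 2)
  have hs0 : s 0 = 0 := by rw [hs 0, intervalIntegral.integral_same]
  congr 1
  ext ω
  simp only [Set.mem_setOf_eq]
  constructor
  · intro h u hu
    obtain ⟨ht0, hst⟩ := htinv_right u hu.1
    have htT : tinv u ≤ T := by
      by_contra hc
      push_neg at hc
      have := hs_mono hc
      rw [hst] at this
      linarith [hu.2, hS ▸ this]
    have := h (tinv u) ⟨ht0, htT⟩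
    rw [hX (tinv u) ω, hst, Real.exp_neg] at this
    exact ⟨(bcp_aux _ _ _ _ _ _ (Real.exp_pos _)).mp this.1,
      (bcp_aux2 _ _ _ _ _ _ (Real.exp_pos _)).mp this.2⟩
  · intro h t ht
    have hu0 : 0 ≤ s t := by rw [← hs0]; exact hs_mono.monotone ht.1
    have huS : s t ≤ S := by rw [hS]; exact hs_mono.monotone ht.2
    have := h (s t) ⟨hu0, huS⟩
    rw [htinv_left t ht.1] at this
    rw [hX t ω, Real.exp_neg]
    refine ⟨(bcp_aux _ _ _ _ _ _ (Real.exp_pos _)).mpr this.1, ?_⟩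
    exact (bcp_aux2 _ _ _ _ _ _ (Real.exp_pos _)).mpr this.2
end

section
/- Let α, β, σ > 0 and x_0 > 0, and let W̃ be a standard Brownian motion. Define f(t,x) = (e^{βt}/σ)(log x + (σ² − 2α)/(2β)) for x > 0, s(t) = (e^{2βt} − 1)/(2β) with inverse t(s) = (1/(2β)) log(1 + 2βs), and the growth process X_t := exp( σ e^{−βt}( f(0,x_0) + W̃_{s(t)} ) − (σ² − 2α)/(2β) ), i.e., the positive process determined by f(t, X_t) = f(0, x_0) + W̃_{s(t)} (the solution of dX_t = (αX_t − βX_t log X_t)dt + σX_t dW_t, X_0 = x_0). Then for any T > 0 and any functions a, b : [0,T] → (0,∞) with a(0) < x_0 < b(0), P(a(t) < X_t < b(t) for all t ∈ [0,T]) = P(c(s) < W̃_s < d(s) for all s ∈ [0,S]), where c(s) = (√(1+2βs)/σ)(log a(t(s)) + (σ²−2α)/(2β)) − (1/σ)(log x_0 + (σ²−2α)/(2β)), d(s) = (√(1+2βs)/σ)(log b(t(s)) + (σ²−2α)/(2β)) − (1/σ)(log x_0 + (σ²−2α)/(2β)), and S = (e^{2βT} − 1)/(2β). -/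
open MeasureTheory ProbabilityTheory Filter Set

lemma ineq_aux (E σ L κ p w : ℝ) (hE : 0 < E) (hσ : 0 < σ) :
    E / σ * (L + κ) - p < w ↔ L < σ * E⁻¹ * (p + w) - κ := by
  rw [div_mul_eq_mul_div, sub_lt_iff_lt_add, div_lt_iff₀ hσ, lt_sub_iff_add_lt,
    mul_comm σ E⁻¹, mul_assoc, ← lt_div_iff₀' hE, inv_mul_eq_div,
    show (w + p) * σ / E = σ * (p + w) / E from by ring]

lemma ineq_aux2 (E σ L κ p w : ℝ) (hE : 0 < E) (hσ : 0 < σ) :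
    w < E / σ * (L + κ) - p ↔ σ * E⁻¹ * (p + w) - κ < L := by
  rw [lt_sub_iff_add_lt, div_mul_eq_mul_div, lt_div_iff₀ hσ, sub_lt_iff_lt_add,
    mul_comm σ E⁻¹, mul_assoc, ← div_lt_iff₀' hE, inv_mul_eq_div,
    show (w + p) * σ / E = σ * (p + w) / E from by ring]


/-- Boundary crossing probabilities for the growth process, reduced to boundary
crossing probabilities for a standard Brownian motion. -/
theorem bcp_growth_process
    {Ω : Type*} [MeasureSpace Ω] [IsProbabilityMeasure (ℙ : Measure Ω)]
    (α β σ x₀ : ℝ) (hα : 0 < α) (hβ : 0 < β) (hσ : 0 < σ) (hx₀ : 0 < x₀)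
    (W : ℝ → Ω → ℝ) (hW : IsStandardBM W)
    (f : ℝ → ℝ → ℝ)
    (hf : ∀ t x : ℝ, f t x =
      (Real.exp (β * t) / σ) * (Real.log x + (σ ^ 2 - 2 * α) / (2 * β)))
    (s tinv : ℝ → ℝ)
    (hs : ∀ t : ℝ, s t = (Real.exp (2 * β * t) - 1) / (2 * β))
    (htinv : ∀ u : ℝ, tinv u = (1 / (2 * β)) * Real.log (1 + 2 * β * u))
    (X : ℝ → Ω → ℝ)
    (hX : ∀ (t : ℝ) (ω : Ω), X t ω =
      Real.exp (σ * Real.exp (-β * t) * (f 0 x₀ + W (s t) ω) - (σ ^ 2 - 2 * α) / (2 * β)))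
    (T : ℝ) (hT : 0 < T)
    (a b : ℝ → ℝ) (ha_pos : ∀ t ∈ Set.Icc (0 : ℝ) T, 0 < a t)
    (hb_pos : ∀ t ∈ Set.Icc (0 : ℝ) T, 0 < b t)
    (ha0 : a 0 < x₀) (hb0 : x₀ < b 0)
    (S : ℝ) (hS : S = (Real.exp (2 * β * T) - 1) / (2 * β)) :
    ℙ {ω : Ω | ∀ t ∈ Set.Icc (0 : ℝ) T, a t < X t ω ∧ X t ω < b t} =
      ℙ {ω : Ω | ∀ u ∈ Set.Icc (0 : ℝ) S,
        (Real.sqrt (1 + 2 * β * u) / σ) *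
            (Real.log (a (tinv u)) + (σ ^ 2 - 2 * α) / (2 * β)) -
          (1 / σ) * (Real.log x₀ + (σ ^ 2 - 2 * α) / (2 * β)) < W u ω ∧
        W u ω < (Real.sqrt (1 + 2 * β * u) / σ) *
            (Real.log (b (tinv u)) + (σ ^ 2 - 2 * α) / (2 * β)) -
          (1 / σ) * (Real.log x₀ + (σ ^ 2 - 2 * α) / (2 * β))} := by
  have hβ2 : (0:ℝ) < 2 * β := by linarith
  set κ := (σ ^ 2 - 2 * α) / (2 * β) with hκ
  have hf0 : f 0 x₀ = 1 / σ * (Real.log x₀ + κ) := by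
    rw [hf]; simp
  have hstinv : ∀ u : ℝ, 0 ≤ u → s (tinv u) = u := by
    intro u hu
    have h1 : (0:ℝ) < 1 + 2 * β * u := by nlinarith
    rw [hs, htinv,
      show 2 * β * (1 / (2 * β) * Real.log (1 + 2 * β * u)) = Real.log (1 + 2 * β * u) from by
        field_simp,
      Real.exp_log h1]
    field_simp
    ring
  have htinvs : ∀ t : ℝ, tinv (s t) = t := by
    intro t
    rw [htinv, hs,
      show 1 + 2 * β * ((Real.exp (2 * β * t) - 1) / (2 * β)) = Real.exp (2 * β * t) from by
        field_simp; ring,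
      Real.log_exp]
    field_simp
  have hsqrt : ∀ t : ℝ, Real.sqrt (1 + 2 * β * s t) = Real.exp (β * t) := by
    intro t
    rw [hs,
      show 1 + 2 * β * ((Real.exp (2 * β * t) - 1) / (2 * β)) = Real.exp (β * t) ^ 2 from by
        rw [show Real.exp (β * t) ^ 2 = Real.exp (β * t) * Real.exp (β * t) from sq _,
          ← Real.exp_add]
        field_simp
        ring_nf,
      Real.sqrt_sq (Real.exp_pos _).le]
  have hsmem : ∀ t ∈ Set.Icc (0:ℝ) T, s t ∈ Set.Icc (0:ℝ) S := by
    intro t ht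
    have h1 : (1:ℝ) ≤ Real.exp (2 * β * t) := Real.one_le_exp (by nlinarith [ht.1])
    have h2 : Real.exp (2 * β * t) ≤ Real.exp (2 * β * T) :=
      Real.exp_le_exp.mpr (by nlinarith [ht.2])
    constructor
    · rw [hs]; apply div_nonneg (by linarith) hβ2.le
    · rw [hs, hS]; apply div_le_div_of_nonneg_right (by linarith) hβ2.le
  have htmem : ∀ u ∈ Set.Icc (0:ℝ) S, tinv u ∈ Set.Icc (0:ℝ) T := by
    intro u hu
    have h1 : (0:ℝ) < 1 + 2 * β * u := by nlinarith [hu.1]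
    have hSe : 1 + 2 * β * S = Real.exp (2 * β * T) := by rw [hS]; field_simp; ring
    have h3 : Real.log (1 + 2 * β * u) ≤ 2 * β * T := by
      calc Real.log (1 + 2 * β * u) ≤ Real.log (Real.exp (2 * β * T)) := by
            apply Real.log_le_log h1; nlinarith [hu.2]
        _ = 2 * β * T := Real.log_exp _
    constructor
    · rw [htinv]
      exact mul_nonneg (by positivity) (Real.log_nonneg (by nlinarith [hu.1]))
    · rw [htinv]
      calc 1 / (2 * β) * Real.log (1 + 2 * β * u) ≤ 1 / (2 * β) * (2 * β * T) := by
            apply mul_le_mul_of_nonneg_left h3 (by positivity)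
        _ = T := by field_simp
  have key : ∀ t ∈ Set.Icc (0:ℝ) T, ∀ ω : Ω,
      ((a t < X t ω ∧ X t ω < b t) ↔
        (Real.sqrt (1 + 2 * β * s t) / σ * (Real.log (a (tinv (s t))) + κ) -
            1 / σ * (Real.log x₀ + κ) < W (s t) ω ∧
          W (s t) ω < Real.sqrt (1 + 2 * β * s t) / σ * (Real.log (b (tinv (s t))) + κ) -
            1 / σ * (Real.log x₀ + κ))) := by
    intro t ht ω
    rw [htinvs, hsqrt, hX, ← Real.log_lt_iff_lt_exp (ha_pos t ht),
      ← Real.lt_log_iff_exp_lt (hb_pos t ht), neg_mul, Real.exp_neg, hf0]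
    exact ⟨fun h => ⟨(ineq_aux _ σ _ κ _ _ (Real.exp_pos _) hσ).mpr h.1,
        (ineq_aux2 _ σ _ κ _ _ (Real.exp_pos _) hσ).mpr h.2⟩,
      fun h => ⟨(ineq_aux _ σ _ κ _ _ (Real.exp_pos _) hσ).mp h.1,
        (ineq_aux2 _ σ _ κ _ _ (Real.exp_pos _) hσ).mp h.2⟩⟩
  congr 1
  ext ω
  simp only [Set.mem_setOf_eq]
  constructor
  · intro h u hu
    have h2 := key (tinv u) (htmem u hu) ω
    rw [hstinv u hu.1] at h2
    exact h2.mp (h _ (htmem u hu))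
  · intro h t ht
    exact (key t ht ω).mpr (h (s t) (hsmem t ht))
end

section
/- Let α, β, σ > 0 and x_0 > 0, let W̃ be a standard Brownian motion, and define the growth process X_t := exp( σ e^{−βt}( f(0,x_0) + W̃_{s(t)} ) − (σ² − 2α)/(2β) ), where f(t,x) = (e^{βt}/σ)(log x + (σ²−2α)/(2β)) and s(t) = (e^{2βt}−1)/(2β). Let h ∈ ℝ satisfy h > log x_0 + (σ² − 2α)/(2β), and let T > 0. Then P( X_t < exp( h e^{−βt} − (σ²−2α)/(2β) ) for all t ∈ [0,T] ) = 2·Φ( (2β(h − log x_0) − σ² + 2α) / (σ √(2β(e^{2βT}−1))) ) − 1, where Φ is the standard normal distribution function. -/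
open MeasureTheory ProbabilityTheory Filter Set

/-- The standard normal cumulative distribution function `Φ`. -/
noncomputable def stdNormalCDF (x : ℝ) : ℝ :=
  (ProbabilityTheory.gaussianReal 0 1 (Set.Iic x)).toReal

open scoped NNReal ENNReal Real Topology

set_option linter.unusedSectionVars false
set_option linter.unnecessarySimpa false

section Gauss

lemma gauss_neg (v : ℝ≥0) (s : Set ℝ) (hs : MeasurableSet s) :
    gaussianReal 0 v ((fun x => -x) ⁻¹' s) = gaussianReal 0 v s := by
  have h := gaussianReal_map_const_mul (μ := 0) (v := v) (-1)
  have h2 : (NNReal.mk ((-1:ℝ)^2) (sq_nonneg _) * v : ℝ≥0) = v := by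
    ext; simp
  rw [h2, mul_zero] at h
  calc gaussianReal 0 v ((fun x => -x) ⁻¹' s)
      = gaussianReal 0 v (((-1 : ℝ) * ·) ⁻¹' s) := by
        congr 1; ext x; simp
    _ = (gaussianReal 0 v).map ((-1 : ℝ) * ·) s := by
        rw [Measure.map_apply (by fun_prop) hs]
    _ = gaussianReal 0 v s := by rw [h]

lemma gauss_Ici_eq_Iic_neg (v : ℝ≥0) (x : ℝ) :
    gaussianReal 0 v (Ici x) = gaussianReal 0 v (Iic (-x)) := by
  have := gauss_neg v (Iic (-x)) measurableSet_Iic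
  have hpre : (fun y : ℝ => -y) ⁻¹' (Iic (-x)) = Ici x := by
    ext y; simp
  rwa [hpre] at this

lemma gauss_Icc_le {v : ℝ≥0} (hv : v ≠ 0) (u w : ℝ) :
    gaussianReal 0 v (Icc u w) ≤ ENNReal.ofReal ((w - u) * (Real.sqrt (2 * Real.pi * v))⁻¹) := by
  rw [gaussianReal_apply _ hv]
  calc (∫⁻ x in Icc u w, gaussianPDF 0 v x)
      ≤ ∫⁻ _ in Icc u w, ENNReal.ofReal ((Real.sqrt (2 * Real.pi * v))⁻¹) := by
        refine setLIntegral_mono (by fun_prop) fun x _ => ?_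
        refine ENNReal.ofReal_le_ofReal ?_
        rw [gaussianPDFReal]
        refine mul_le_of_le_one_right (by positivity) ?_
        refine Real.exp_le_one_iff.2 ?_
        apply div_nonpos_of_nonpos_of_nonneg
        · simp [neg_nonpos, sq_nonneg]
        · positivity
    _ = ENNReal.ofReal ((Real.sqrt (2 * Real.pi * v))⁻¹) * volume (Icc u w) := by
        rw [setLIntegral_const]
    _ = _ := by
        rw [Real.volume_Icc, ENNReal.ofReal_mul' (by positivity), mul_comm]

lemma gauss_singleton {v : ℝ≥0} (hv : v ≠ 0) (x : ℝ) :
    gaussianReal 0 v {x} = 0 :=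
  gaussianReal_absolutelyContinuous _ hv (measure_singleton x)

lemma gauss_Ioi_add_Iic (v : ℝ≥0) (x : ℝ) :
    gaussianReal 0 v (Ioi x) + gaussianReal 0 v (Iic x) = 1 := by
  rw [add_comm, ← compl_Iic]
  exact prob_add_prob_compl measurableSet_Iic

lemma gauss_scale_Iic {S : ℝ} (hS : 0 < S) (a : ℝ) :
    gaussianReal 0 (Real.toNNReal S) (Iic a)
      = gaussianReal 0 1 (Iic (a / Real.sqrt S)) := by
  have h := gaussianReal_map_const_mul (μ := 0) (v := 1) (Real.sqrt S)
  have h2 : (NNReal.mk ((Real.sqrt S)^2) (sq_nonneg _) * 1 : ℝ≥0) = Real.toNNReal S := by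
    ext; simp [Real.sq_sqrt hS.le, Real.coe_toNNReal _ hS.le]
  rw [h2, mul_zero] at h
  have hpre : ((Real.sqrt S * ·) : ℝ → ℝ) ⁻¹' (Iic a) = Iic (a / Real.sqrt S) := by
    ext x
    simp only [mem_preimage, mem_Iic]
    rw [le_div_iff₀ (Real.sqrt_pos.2 hS), mul_comm]
  rw [← h, Measure.map_apply (by fun_prop) measurableSet_Iic, hpre]

end Gauss

lemma indep_fubini {Ω : Type*} [MeasureSpace Ω] [IsProbabilityMeasure (ℙ : Measure Ω)]
    {E : Type*} [MeasurableSpace E] {X : Ω → E} {Z : Ω → ℝ}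
    (hX : Measurable X) (hZ : Measurable Z) (hInd : IndepFun X Z ℙ)
    {C : Set (E × ℝ)} (hC : MeasurableSet C) :
    ℙ {ω | (X ω, Z ω) ∈ C} = ∫⁻ ω, (Measure.map Z ℙ) {z | (X ω, z) ∈ C} ∂ℙ := by
  haveI : IsProbabilityMeasure (Measure.map Z ℙ) := Measure.isProbabilityMeasure_map hZ.aemeasurable
  haveI : IsProbabilityMeasure (Measure.map X ℙ) := Measure.isProbabilityMeasure_map hX.aemeasurable
  have hmap := (indepFun_iff_map_prod_eq_prod_map_map hX.aemeasurable hZ.aemeasurable).1 hInd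
  have hpair : Measurable fun ω => (X ω, Z ω) := hX.prodMk hZ
  calc ℙ {ω | (X ω, Z ω) ∈ C}
      = Measure.map (fun ω => (X ω, Z ω)) ℙ C := by
        rw [Measure.map_apply hpair hC]; rfl
    _ = ((Measure.map X ℙ).prod (Measure.map Z ℙ)) C := by rw [hmap]
    _ = ∫⁻ x, (Measure.map Z ℙ) (Prod.mk x ⁻¹' C) ∂(Measure.map X ℙ) :=
        Measure.prod_apply hC
    _ = ∫⁻ ω, (Measure.map Z ℙ) (Prod.mk (X ω) ⁻¹' C) ∂ℙ :=
        lintegral_map (measurable_measure_prodMk_left hC) hX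
    _ = ∫⁻ ω, (Measure.map Z ℙ) {z | (X ω, z) ∈ C} ∂ℙ := rfl

namespace BMaux

/-- grid times -/
noncomputable def tg (S : ℝ) (n k : ℕ) : ℝ := k * S / 2 ^ n

lemma tg_zero (S : ℝ) (n : ℕ) : tg S n 0 = 0 := by simp [tg]

lemma tg_top (S : ℝ) (n : ℕ) : tg S n (2 ^ n) = S := by
  have : ((2:ℝ) ^ n) ≠ 0 := by positivity
  unfold tg; push_cast; exact mul_div_cancel_left₀ S this

lemma tg_mono {S : ℝ} (hS : 0 ≤ S) (n : ℕ) {j k : ℕ} (h : j ≤ k) : tg S n j ≤ tg S n k := by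
  unfold tg
  have h' : (j:ℝ) ≤ k := by exact_mod_cast h
  gcongr

lemma tg_nonneg {S : ℝ} (hS : 0 ≤ S) (n k : ℕ) : 0 ≤ tg S n k := by
  have := tg_mono hS n (Nat.zero_le k)
  rwa [tg_zero] at this

lemma tg_le {S : ℝ} (hS : 0 ≤ S) {n k : ℕ} (h : k ≤ 2 ^ n) : tg S n k ≤ S := by
  have := tg_mono hS n h
  rwa [tg_top] at this

lemma tg_strictMono {S : ℝ} (hS : 0 < S) (n : ℕ) {j k : ℕ} (h : j < k) : tg S n j < tg S n k := by
  unfold tg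
  have h' : (j:ℝ) < k := by exact_mod_cast h
  have h2 : (0:ℝ) < 2 ^ n := by positivity
  rw [div_lt_div_iff₀ h2 h2]
  have : (j:ℝ) * S < k * S := mul_lt_mul_of_pos_right h' hS
  nlinarith [h2]

lemma tg_double (S : ℝ) (n k : ℕ) : tg S n k = tg S (n + 1) (2 * k) := by
  unfold tg
  push_cast
  ring

lemma tg_diff (S : ℝ) (n k : ℕ) : tg S n (k + 1) - tg S n k = S / 2 ^ n := by
  unfold tg
  field_simp
  push_cast; ring

/-- increments from `0`: `Y n k = W (t_k) - W 0`. -/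
noncomputable def Yg {Ω : Type*} (W : ℝ → Ω → ℝ) (S : ℝ) (n k : ℕ) (ω : Ω) : ℝ :=
  W (tg S n k) ω - W 0 ω

/-- first-crossing-at-`k` event -/
def Pk {Ω : Type*} (W : ℝ → Ω → ℝ) (S a : ℝ) (n k : ℕ) : Set Ω :=
  {ω | (∀ j < k, Yg W S n j ω ≤ a) ∧ a < Yg W S n k ω}

/-- grid crossing event -/
def Ag {Ω : Type*} (W : ℝ → Ω → ℝ) (S a : ℝ) (n : ℕ) : Set Ω :=
  {ω | ∃ k ≤ 2 ^ n, a < Yg W S n k ω}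

/-- increment vector -/
noncomputable def Vg {Ω : Type*} (W : ℝ → Ω → ℝ) (S : ℝ) (n k : ℕ) (ω : Ω) : Fin k → ℝ :=
  fun i => W (tg S n ((i : ℕ) + 1)) ω - W (tg S n (i : ℕ)) ω

/-- partial sums of a vector -/
def psum (k j : ℕ) (x : Fin k → ℝ) : ℝ := ∑ i : Fin k, if (i : ℕ) < j then x i else 0

lemma psum_zero (k : ℕ) (x : Fin k → ℝ) : psum k 0 x = 0 := by simp [psum]

lemma psum_succ {k j : ℕ} (hj : j < k) (x : Fin k → ℝ) :
    psum k (j + 1) x = psum k j x + x ⟨j, hj⟩ := by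
  unfold psum
  have key : ∀ i : Fin k, (if (i : ℕ) < j + 1 then x i else 0)
      = (if (i : ℕ) < j then x i else 0) + (if i = ⟨j, hj⟩ then x i else 0) := by
    intro i
    rcases lt_trichotomy (i : ℕ) j with h | h | h
    · rw [if_pos (Nat.lt_succ_of_lt h), if_pos h, if_neg (by
        intro he; subst he; exact absurd h (lt_irrefl _)), add_zero]
    · rw [if_pos (by omega), if_neg (by omega), if_pos (by ext; exact h), zero_add]
    · rw [if_neg (by omega), if_neg (by omega), if_neg (by
        intro he; subst he; simp at h), add_zero]
  rw [Finset.sum_congr rfl fun i _ => key i, Finset.sum_add_distrib]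
  congr 1
  rw [Finset.sum_ite_eq' Finset.univ (⟨j, hj⟩ : Fin k) x]
  simp

lemma psum_measurable (k j : ℕ) : Measurable (psum k j) := by
  apply Finset.measurable_sum
  intro i _
  by_cases h : (i : ℕ) < j
  · simpa [h] using measurable_pi_apply i
  · simpa [h] using measurable_const

section withOmega

variable {Ω : Type*} [MeasureSpace Ω] [IsProbabilityMeasure (ℙ : Measure Ω)]
  {W : ℝ → Ω → ℝ}

lemma Yg_meas (hW : IsStandardBM W) (S : ℝ) (n k : ℕ) : Measurable (Yg W S n k) :=
  (hW.meas _).sub (hW.meas _)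

lemma Vg_meas (hW : IsStandardBM W) (S : ℝ) (n k : ℕ) : Measurable (Vg W S n k) :=
  measurable_pi_lambda _ fun i => (hW.meas _).sub (hW.meas _)

lemma Pk_meas (hW : IsStandardBM W) (S a : ℝ) (n k : ℕ) : MeasurableSet (Pk W S a n k) := by
  have : Pk W S a n k
      = (⋂ j ∈ Set.Iio k, {ω | Yg W S n j ω ≤ a}) ∩ {ω | a < Yg W S n k ω} := by
    ext ω; simp [Pk]
  rw [this]
  exact MeasurableSet.inter
    (MeasurableSet.biInter (to_countable _) fun j _ =>
      measurableSet_le (Yg_meas hW S n j) measurable_const)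
    (measurableSet_lt measurable_const (Yg_meas hW S n k))

lemma Ag_meas (hW : IsStandardBM W) (S a : ℝ) (n : ℕ) : MeasurableSet (Ag W S a n) := by
  rw [show Ag W S a n = ⋃ k ∈ Set.Iic (2 ^ n), {ω | a < Yg W S n k ω} by ext ω; simp [Ag]]
  exact MeasurableSet.biUnion (to_countable _) fun k _ =>
    measurableSet_lt measurable_const (Yg_meas hW S n k)

lemma Yg_eq_psum (S : ℝ) (n : ℕ) {j k : ℕ} (hj : j ≤ k) (ω : Ω) :
    Yg W S n j ω = psum k j (Vg W S n k ω) := by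
  induction j with
  | zero => rw [psum_zero]; unfold Yg; rw [tg_zero]; exact sub_self _
  | succ j ih =>
      have hjk : j < k := hj
      rw [psum_succ hjk, ← ih (le_of_lt hjk)]
      show W (tg S n (j + 1)) ω - W 0 ω
        = (W (tg S n j) ω - W 0 ω) + (W (tg S n (j + 1)) ω - W (tg S n j) ω)
      ring

lemma indep_V_Z (hW : IsStandardBM W) {S : ℝ} (hS : 0 ≤ S) {n k : ℕ} (hk : k < 2 ^ n) :
    IndepFun (Vg W S n k) (fun ω => W (tg S n (2 ^ n)) ω - W (tg S n k) ω) ℙ := by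
  classical
  set τ : Fin (k + 2) → ℝ := fun i => if (i : ℕ) ≤ k then tg S n i else tg S n (2 ^ n) with hτ
  have hτ0 : ∀ i, 0 ≤ τ i := by
    intro i
    by_cases h : (i : ℕ) ≤ k
    · simpa [hτ, h] using tg_nonneg hS n i
    · simpa [hτ, h] using tg_nonneg hS n (2 ^ n)
  have hτm : Monotone τ := by
    intro i j hij
    have hij' : (i : ℕ) ≤ (j : ℕ) := hij
    by_cases hi : (i : ℕ) ≤ k <;> by_cases hj : (j : ℕ) ≤ k
    · simpa [hτ, hi, hj] using tg_mono hS n hij'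
    · simpa [hτ, hi, hj] using tg_mono hS n (le_of_lt (lt_of_le_of_lt hi hk))
    · omega
    · simpa [hτ, hi, hj] using le_refl _
  have hind := hW.indep_incr (k + 1) τ hτ0 hτm
  set S₁ : Finset (Fin (k + 1)) := Finset.univ.filter (fun i => (i : ℕ) < k) with hS₁
  set T₁ : Finset (Fin (k + 1)) := {Fin.last k} with hT₁
  have hdisj : Disjoint S₁ T₁ := by
    rw [Finset.disjoint_right]
    intro i hi hmem
    rw [hT₁, Finset.mem_singleton] at hi
    rw [hS₁, Finset.mem_filter] at hmem
    subst hi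
    simp [Fin.val_last] at hmem
  have hsplit := hind.indepFun_finset S₁ T₁ hdisj (fun i => (hW.meas _).sub (hW.meas _))
  set φ : (∀ _ : {x // x ∈ S₁}, ℝ) → (Fin k → ℝ) :=
    fun g i => g ⟨Fin.castLE (Nat.le_succ k) i, by
      rw [hS₁, Finset.mem_filter]; exact ⟨Finset.mem_univ _, i.isLt⟩⟩ with hφdef
  set ψ : (∀ _ : {x // x ∈ T₁}, ℝ) → ℝ :=
    fun g => g ⟨Fin.last k, by rw [hT₁]; exact Finset.mem_singleton_self _⟩ with hψdef
  have hφ : Measurable φ := measurable_pi_lambda _ fun i => measurable_pi_apply _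
  have hψ : Measurable ψ := measurable_pi_apply _
  have h2 := hsplit.comp hφ hψ
  have e1 : (φ ∘ fun a (i : {x // x ∈ S₁}) =>
      (fun ω => W (τ (i : Fin (k+1)).succ) ω - W (τ (i : Fin (k+1)).castSucc) ω) a)
      = Vg W S n k := by
    funext ω i
    show W (τ ((Fin.castLE (Nat.le_succ k) i)).succ) ω
        - W (τ ((Fin.castLE (Nat.le_succ k) i)).castSucc) ω = _
    have hsucc : ((Fin.castLE (Nat.le_succ k) i).succ : ℕ) = (i : ℕ) + 1 := rfl
    have hcs : ((Fin.castLE (Nat.le_succ k) i).castSucc : ℕ) = (i : ℕ) := rfl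
    have h1 : τ (Fin.castLE (Nat.le_succ k) i).succ = tg S n ((i : ℕ) + 1) := by
      rw [hτ]; simp only [hsucc]; rw [if_pos (by omega)]
    have h2 : τ (Fin.castLE (Nat.le_succ k) i).castSucc = tg S n (i : ℕ) := by
      rw [hτ]; simp only [hcs]; rw [if_pos (by omega)]
    rw [h1, h2]; rfl
  have e2 : (ψ ∘ fun a (i : {x // x ∈ T₁}) =>
      (fun ω => W (τ (i : Fin (k+1)).succ) ω - W (τ (i : Fin (k+1)).castSucc) ω) a)
      = fun ω => W (tg S n (2 ^ n)) ω - W (tg S n k) ω := by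
    funext ω
    show W (τ (Fin.last k).succ) ω - W (τ (Fin.last k).castSucc) ω = _
    have h1 : τ (Fin.last k).succ = tg S n (2 ^ n) := by
      rw [hτ]
      have : ((Fin.last k).succ : ℕ) = k + 1 := rfl
      simp only [this]
      rw [if_neg (by omega)]
    have h2 : τ (Fin.last k).castSucc = tg S n k := by
      rw [hτ]
      have : ((Fin.last k).castSucc : ℕ) = k := rfl
      simp only [this]
      rw [if_pos (le_refl _)]
    rw [h1, h2]
  rw [e1, e2] at h2
  exact h2

/-- crossing set in increment-vector space -/
def PSet (a : ℝ) (k : ℕ) : Set (Fin k → ℝ) :=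
  {x | (∀ j < k, psum k j x ≤ a) ∧ a < psum k k x}

lemma PSet_meas (a : ℝ) (k : ℕ) : MeasurableSet (PSet a k) := by
  have : PSet a k
      = (⋂ j ∈ Set.Iio k, {x | psum k j x ≤ a}) ∩ {x | a < psum k k x} := by
    ext x; simp [PSet]
  rw [this]
  exact MeasurableSet.inter
    (MeasurableSet.biInter (to_countable _) fun j _ =>
      measurableSet_le (psum_measurable k j) measurable_const)
    (measurableSet_lt measurable_const (psum_measurable k k))

lemma mem_Pk_iff {S a : ℝ} {n k : ℕ} (ω : Ω) :
    ω ∈ Pk W S a n k ↔ Vg W S n k ω ∈ PSet a k := by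
  unfold Pk PSet
  simp only [mem_setOf_eq]
  constructor
  · rintro ⟨h1, h2⟩
    exact ⟨fun j hj => (Yg_eq_psum S n hj.le ω) ▸ h1 j hj, (Yg_eq_psum S n le_rfl ω) ▸ h2⟩
  · rintro ⟨h1, h2⟩
    exact ⟨fun j hj => (Yg_eq_psum S n hj.le ω) ▸ h1 j hj, (Yg_eq_psum S n le_rfl ω) ▸ h2⟩

lemma refl_repr (hW : IsStandardBM W) {S : ℝ} (hS : 0 < S) (a : ℝ) (n : ℕ) {k : ℕ}
    (hk : k < 2 ^ n) (s : ℝ → Set ℝ)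
    (hs : MeasurableSet {p : ℝ × ℝ | p.2 ∈ s p.1}) :
    ℙ (Pk W S a n k ∩ {ω | Yg W S n (2 ^ n) ω - Yg W S n k ω ∈ s (Yg W S n k ω)})
      = ∫⁻ ω in Pk W S a n k,
          gaussianReal 0 (Real.toNNReal (tg S n (2 ^ n) - tg S n k)) (s (Yg W S n k ω)) ∂ℙ := by
  classical
  set ν := gaussianReal 0 (Real.toNNReal (tg S n (2 ^ n) - tg S n k)) with hν
  set C : Set ((Fin k → ℝ) × ℝ) := {p | p.1 ∈ PSet a k ∧ p.2 ∈ s (psum k k p.1)} with hC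
  have hCmeas : MeasurableSet C := by
    have hCe : C = ((PSet a k) ×ˢ (univ : Set ℝ)) ∩
        ((fun p : (Fin k → ℝ) × ℝ => (psum k k p.1, p.2)) ⁻¹' {p : ℝ × ℝ | p.2 ∈ s p.1}) := by
      ext p; simp [hC]
    rw [hCe]
    exact ((PSet_meas a k).prod MeasurableSet.univ).inter
      ((((psum_measurable k k).comp measurable_fst).prodMk measurable_snd) hs)
  have key := indep_fubini (Z := fun ω => W (tg S n (2 ^ n)) ω - W (tg S n k) ω) (Vg_meas hW S n k) ((hW.meas _).sub (hW.meas _))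
    (indep_V_Z hW hS.le hk) hCmeas
  have hE : {ω | (Vg W S n k ω, W (tg S n (2 ^ n)) ω - W (tg S n k) ω) ∈ C}
      = Pk W S a n k ∩ {ω | Yg W S n (2 ^ n) ω - Yg W S n k ω ∈ s (Yg W S n k ω)} := by
    ext ω
    have h1 : (Vg W S n k ω ∈ PSet a k) ↔ ω ∈ Pk W S a n k := (mem_Pk_iff ω).symm
    have h2 : psum k k (Vg W S n k ω) = Yg W S n k ω := (Yg_eq_psum S n le_rfl ω).symm
    have h3 : W (tg S n (2 ^ n)) ω - W (tg S n k) ω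
        = Yg W S n (2 ^ n) ω - Yg W S n k ω := by unfold Yg; ring
    simp only [hC, mem_setOf_eq, mem_inter_iff, h2, h3]
    rw [h1]
  have hlaw : Measure.map (fun ω => W (tg S n (2 ^ n)) ω - W (tg S n k) ω) ℙ = ν :=
    hW.gauss_incr _ _ (tg_nonneg hS.le n k) (tg_mono hS.le n hk.le)
  have hsec : ∀ ω : Ω,
      (Measure.map (fun ω => W (tg S n (2 ^ n)) ω - W (tg S n k) ω) ℙ)
          {z | (Vg W S n k ω, z) ∈ C}
        = (Pk W S a n k).indicator (fun ω' => ν (s (Yg W S n k ω'))) ω := by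
    intro ω
    rw [hlaw]
    by_cases hω : ω ∈ Pk W S a n k
    · have hmem : Vg W S n k ω ∈ PSet a k := (mem_Pk_iff ω).1 hω
      have : {z | (Vg W S n k ω, z) ∈ C} = s (Yg W S n k ω) := by
        ext z
        simp only [hC, mem_setOf_eq, hmem, true_and, Yg_eq_psum S n le_rfl ω]
      rw [this, indicator_of_mem hω]
    · have hmem : Vg W S n k ω ∉ PSet a k := fun hc => hω ((mem_Pk_iff ω).2 hc)
      have : {z | (Vg W S n k ω, z) ∈ C} = (∅ : Set ℝ) := by
        ext z; simp only [hC, mem_setOf_eq, hmem, false_and]; simp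
      rw [this, indicator_of_notMem hω]
      simp
  rw [hE] at key
  calc ℙ (Pk W S a n k ∩ {ω | Yg W S n (2 ^ n) ω - Yg W S n k ω ∈ s (Yg W S n k ω)})
      = ∫⁻ ω, (Measure.map (fun ω => W (tg S n (2 ^ n)) ω - W (tg S n k) ω) ℙ)
          {z | (Vg W S n k ω, z) ∈ C} ∂ℙ := key
    _ = ∫⁻ ω, (Pk W S a n k).indicator (fun ω' => ν (s (Yg W S n k ω'))) ω ∂ℙ :=
        lintegral_congr hsec
    _ = ∫⁻ ω in Pk W S a n k, ν (s (Yg W S n k ω)) ∂ℙ :=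
        lintegral_indicator (Pk_meas hW S a n k) _

lemma refl_sets_le {S a : ℝ} {n k : ℕ} :
    Pk W S a n k ∩ {ω | Yg W S n (2 ^ n) ω ≤ a}
      = Pk W S a n k ∩ {ω | Yg W S n (2 ^ n) ω - Yg W S n k ω ∈ Iic (a - Yg W S n k ω)} := by
  ext ω; simp [mem_Iic, sub_le_sub_iff_right]

lemma refl_sets_gt {S a : ℝ} {n k : ℕ} :
    Pk W S a n k ∩ {ω | a < Yg W S n (2 ^ n) ω}
      = Pk W S a n k ∩ {ω | Yg W S n (2 ^ n) ω - Yg W S n k ω ∈ Ioi (a - Yg W S n k ω)} := by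
  ext ω; simp [mem_Ioi, sub_lt_sub_iff_right]

lemma refl_upper (hW : IsStandardBM W) {S : ℝ} (hS : 0 < S) (a : ℝ) (n : ℕ) {k : ℕ}
    (hk : k < 2 ^ n) :
    ℙ (Pk W S a n k ∩ {ω | Yg W S n (2 ^ n) ω ≤ a})
      ≤ ℙ (Pk W S a n k ∩ {ω | a < Yg W S n (2 ^ n) ω}) := by
  set ν := gaussianReal 0 (Real.toNNReal (tg S n (2 ^ n) - tg S n k)) with hν
  have hs1 : MeasurableSet {p : ℝ × ℝ | p.2 ∈ Iic (a - p.1)} :=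
    measurableSet_le measurable_snd (measurable_const.sub measurable_fst)
  have hs2 : MeasurableSet {p : ℝ × ℝ | p.2 ∈ Ioi (a - p.1)} :=
    measurableSet_lt (measurable_const.sub measurable_fst) measurable_snd
  rw [refl_sets_le, refl_sets_gt, refl_repr hW hS a n hk (fun y => Iic (a - y)) hs1,
    refl_repr hW hS a n hk (fun y => Ioi (a - y)) hs2]
  have hmeas : Measurable (fun ω => ν (Ioi (a - Yg W S n k ω))) := by
    have hanti : Antitone (fun r : ℝ => ν (Ioi r)) :=
      fun r r' hrr => measure_mono (fun z hz => lt_of_le_of_lt hrr hz)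
    exact hanti.measurable.comp (measurable_const.sub (Yg_meas hW S n k))
  refine setLIntegral_mono hmeas fun ω hω => ?_
  have hay : a < Yg W S n k ω := hω.2
  calc ν (Iic (a - Yg W S n k ω)) = ν (Ici (Yg W S n k ω - a)) := by
        rw [gauss_Ici_eq_Iic_neg, neg_sub]
    _ ≤ ν (Ioi (a - Yg W S n k ω)) :=
        measure_mono (fun z hz => lt_of_lt_of_le (by linarith : a - Yg W S n k ω < Yg W S n k ω - a) hz)

lemma refl_lower (hW : IsStandardBM W) {S : ℝ} (hS : 0 < S) (a : ℝ) {δ : ℝ} (hδ : 0 < δ)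
    (n : ℕ) {k : ℕ} (hk1 : 1 ≤ k) (hk : k < 2 ^ n) (hkδ : tg S n k ≤ S - δ) :
    ℙ (Pk W S a n k ∩ {ω | a < Yg W S n (2 ^ n) ω})
      ≤ ℙ (Pk W S a n k ∩ {ω | Yg W S n (2 ^ n) ω ≤ a})
        + ∫⁻ ω in Pk W S a n k,
            min 1 (ENNReal.ofReal (2 * (Real.sqrt (2 * Real.pi * δ))⁻¹
              * (Yg W S n k ω - Yg W S n (k - 1) ω))) ∂ℙ := by
  set ν := gaussianReal 0 (Real.toNNReal (tg S n (2 ^ n) - tg S n k)) with hν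
  have hvpos : 0 < tg S n (2 ^ n) - tg S n k := sub_pos.2 (tg_strictMono hS n hk)
  have hvne : (Real.toNNReal (tg S n (2 ^ n) - tg S n k)) ≠ 0 := by
    rw [Ne, Real.toNNReal_eq_zero]; exact not_le.2 hvpos
  have hvcoe : ((Real.toNNReal (tg S n (2 ^ n) - tg S n k) : ℝ≥0) : ℝ)
      = tg S n (2 ^ n) - tg S n k := Real.coe_toNNReal _ hvpos.le
  have hvge : δ ≤ tg S n (2 ^ n) - tg S n k := by
    rw [tg_top]; linarith
  have hs1 : MeasurableSet {p : ℝ × ℝ | p.2 ∈ Iic (a - p.1)} :=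
    measurableSet_le measurable_snd (measurable_const.sub measurable_fst)
  have hs2 : MeasurableSet {p : ℝ × ℝ | p.2 ∈ Ioi (a - p.1)} :=
    measurableSet_lt (measurable_const.sub measurable_fst) measurable_snd
  rw [refl_sets_le, refl_sets_gt, refl_repr hW hS a n hk (fun y => Iic (a - y)) hs1,
    refl_repr hW hS a n hk (fun y => Ioi (a - y)) hs2]
  have hmeas1 : Measurable (fun ω => ν (Iic (a - Yg W S n k ω))) := by
    have hmono : Monotone (fun r : ℝ => ν (Iic r)) :=
      fun r r' hrr => measure_mono (fun z hz => le_trans hz hrr)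
    exact hmono.measurable.comp (measurable_const.sub (Yg_meas hW S n k))
  have key : ∀ ω ∈ Pk W S a n k,
      ν (Ioi (a - Yg W S n k ω))
        ≤ ν (Iic (a - Yg W S n k ω))
          + min 1 (ENNReal.ofReal (2 * (Real.sqrt (2 * Real.pi * δ))⁻¹
              * (Yg W S n k ω - Yg W S n (k - 1) ω))) := by
    intro ω hω
    set y := Yg W S n k ω with hy
    set y' := Yg W S n (k - 1) ω with hy'
    have hay : a < y := hω.2
    have hy'a : y' ≤ a := hω.1 (k - 1) (by omega)
    have hsub : Ioi (a - y) ⊆ Icc (a - y) (y - a) ∪ Ici (y - a) := by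
      intro z hz
      rcases le_or_gt z (y - a) with h | h
      · exact Or.inl ⟨le_of_lt hz, h⟩
      · exact Or.inr (le_of_lt h)
    have hsymm : ν (Ici (y - a)) = ν (Iic (a - y)) := by
      rw [gauss_Ici_eq_Iic_neg, neg_sub]
    have hicc : ν (Icc (a - y) (y - a))
        ≤ min 1 (ENNReal.ofReal (2 * (Real.sqrt (2 * Real.pi * δ))⁻¹ * (y - y'))) := by
      refine le_min prob_le_one ?_
      refine le_trans (gauss_Icc_le hvne (a - y) (y - a)) (ENNReal.ofReal_le_ofReal ?_)
      rw [hvcoe]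
      have hI : (Real.sqrt (2 * Real.pi * (tg S n (2 ^ n) - tg S n k)))⁻¹
          ≤ (Real.sqrt (2 * Real.pi * δ))⁻¹ := by
        apply inv_anti₀
        · apply Real.sqrt_pos.2; positivity
        · apply Real.sqrt_le_sqrt; nlinarith [Real.pi_pos]
      have hIpos : 0 ≤ (Real.sqrt (2 * Real.pi * (tg S n (2 ^ n) - tg S n k)))⁻¹ := by
        positivity
      have hprod : (y - a - (a - y)) * (Real.sqrt (2 * Real.pi * (tg S n (2 ^ n) - tg S n k)))⁻¹
          ≤ (2 * (y - y')) * (Real.sqrt (2 * Real.pi * δ))⁻¹ := by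
        have h1 : y - a - (a - y) ≤ 2 * (y - y') := by linarith
        exact mul_le_mul h1 hI hIpos (by linarith)
      linarith [hprod]
    calc ν (Ioi (a - y)) ≤ ν (Icc (a - y) (y - a) ∪ Ici (y - a)) := measure_mono hsub
      _ ≤ ν (Icc (a - y) (y - a)) + ν (Ici (y - a)) := measure_union_le _ _
      _ = ν (Iic (a - y)) + ν (Icc (a - y) (y - a)) := by rw [hsymm, add_comm]
      _ ≤ ν (Iic (a - y))
          + min 1 (ENNReal.ofReal (2 * (Real.sqrt (2 * Real.pi * δ))⁻¹ * (y - y'))) := by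
          exact add_le_add (le_refl _) hicc
  calc (∫⁻ ω in Pk W S a n k, ν (Ioi (a - Yg W S n k ω)) ∂ℙ)
      ≤ ∫⁻ ω in Pk W S a n k,
          (ν (Iic (a - Yg W S n k ω))
            + min 1 (ENNReal.ofReal (2 * (Real.sqrt (2 * Real.pi * δ))⁻¹
                * (Yg W S n k ω - Yg W S n (k - 1) ω)))) ∂ℙ := by
        refine setLIntegral_mono ?_ key
        refine Measurable.add hmeas1 ?_
        refine Measurable.min measurable_const ?_
        exact (((Yg_meas hW S n k).sub (Yg_meas hW S n (k-1))).const_mul _).ennreal_ofReal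
    _ = _ := lintegral_add_left hmeas1 _

/-- max增量 bound (ENNReal-valued) -/
noncomputable def Mg (W : ℝ → Ω → ℝ) (S c : ℝ) (n : ℕ) (ω : Ω) : ℝ≥0∞ :=
  ⨆ i ∈ Finset.range (2 ^ n), ENNReal.ofReal (c * (Yg W S n (i + 1) ω - Yg W S n i ω))

/-- late-crossing event -/
def LCg (W : ℝ → Ω → ℝ) (S a δ : ℝ) (n : ℕ) : Set Ω :=
  {ω | ∀ j ≤ 2 ^ n, tg S n j ≤ S - δ → Yg W S n j ω ≤ a} ∩
    {ω | ∃ k < 2 ^ n, S - δ < tg S n k ∧ a < Yg W S n k ω}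

lemma Mg_meas (hW : IsStandardBM W) (S c : ℝ) (n : ℕ) : Measurable (Mg W S c n) := by
  apply Measurable.iSup
  intro i
  apply Measurable.iSup
  intro _
  exact (((Yg_meas hW S n (i+1)).sub (Yg_meas hW S n i)).const_mul _).ennreal_ofReal

lemma LCg_meas (hW : IsStandardBM W) (S a δ : ℝ) (n : ℕ) : MeasurableSet (LCg W S a δ n) := by
  apply MeasurableSet.inter
  · rw [show {ω | ∀ j ≤ 2 ^ n, tg S n j ≤ S - δ → Yg W S n j ω ≤ a}
        = ⋂ j ∈ Set.Iic (2 ^ n), ⋂ (_ : tg S n j ≤ S - δ), {ω | Yg W S n j ω ≤ a} by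
      ext ω; simp]
    exact MeasurableSet.biInter (to_countable _) fun j _ =>
      MeasurableSet.iInter fun _ => measurableSet_le (Yg_meas hW S n j) measurable_const
  · rw [show {ω | ∃ k < 2 ^ n, S - δ < tg S n k ∧ a < Yg W S n k ω}
        = ⋃ k ∈ Set.Iio (2 ^ n), ⋃ (_ : S - δ < tg S n k), {ω | a < Yg W S n k ω} by
      ext ω; simp; tauto]
    exact MeasurableSet.biUnion (to_countable _) fun k _ =>
      MeasurableSet.iUnion fun _ => measurableSet_lt measurable_const (Yg_meas hW S n k)

lemma Pk_pairwise_disjoint (W : ℝ → Ω → ℝ) (S a : ℝ) (n : ℕ) {j k : ℕ} (hjk : j ≠ k) :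
    Disjoint (Pk W S a n j) (Pk W S a n k) := by
  rw [Set.disjoint_left]
  intro ω hj hk
  rcases lt_or_gt_of_ne hjk with h | h
  · exact absurd hj.2 (not_lt.2 (hk.1 j h))
  · exact absurd hk.2 (not_lt.2 (hj.1 k h))

lemma Ag_eq_biUnion (W : ℝ → Ω → ℝ) (S a : ℝ) (n : ℕ) :
    Ag W S a n = ⋃ k ∈ Finset.range (2 ^ n + 1), Pk W S a n k := by
  classical
  ext ω
  simp only [Ag, mem_setOf_eq, mem_iUnion, Finset.mem_range]
  constructor
  · rintro ⟨k, hk, hY⟩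
    have hex : ∃ j, a < Yg W S n j ω := ⟨k, hY⟩
    refine ⟨Nat.find hex, ?_, ?_⟩
    · exact Nat.lt_succ_of_le (le_trans (Nat.find_min' hex hY) hk)
    · exact ⟨fun j hj => not_lt.1 (Nat.find_min hex hj), Nat.find_spec hex⟩
  · rintro ⟨k, hk, hmem⟩
    exact ⟨k, Nat.lt_succ_iff.1 hk, hmem.2⟩

lemma sum_Pk_inter (hW : IsStandardBM W) (S a : ℝ) (n : ℕ) {T : Set Ω}
    (hT : MeasurableSet T) :
    ∑ k ∈ Finset.range (2 ^ n + 1), ℙ (Pk W S a n k ∩ T) = ℙ (Ag W S a n ∩ T) := by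
  have hU : Ag W S a n ∩ T = ⋃ k ∈ Finset.range (2 ^ n + 1), (Pk W S a n k ∩ T) := by
    rw [Ag_eq_biUnion, Set.iUnion₂_inter]
  rw [hU, measure_biUnion_finset ?_ ?_]
  · intro j _ k _ hjk
    exact Set.disjoint_of_subset inter_subset_left inter_subset_left
      (Pk_pairwise_disjoint W S a n hjk)
  · exact fun k _ => (Pk_meas hW S a n k).inter hT

lemma G_subset_Ag (W : ℝ → Ω → ℝ) (S a : ℝ) (n : ℕ) :
    {ω | a < Yg W S n (2 ^ n) ω} ⊆ Ag W S a n :=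
  fun ω hω => ⟨2 ^ n, le_refl _, hω⟩

lemma grid_upper (hW : IsStandardBM W) {S : ℝ} (hS : 0 < S) (a : ℝ) (n : ℕ) :
    ℙ (Ag W S a n) ≤ 2 * ℙ {ω | a < Yg W S n (2 ^ n) ω} := by
  set G := {ω | a < Yg W S n (2 ^ n) ω} with hG
  have hGmeas : MeasurableSet G := measurableSet_lt measurable_const (Yg_meas hW S n (2 ^ n))
  have hGcmeas : MeasurableSet {ω | Yg W S n (2 ^ n) ω ≤ a} :=
    measurableSet_le (Yg_meas hW S n (2 ^ n)) measurable_const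
  have hsplit : ∀ k, ℙ (Pk W S a n k)
      = ℙ (Pk W S a n k ∩ {ω | Yg W S n (2 ^ n) ω ≤ a}) + ℙ (Pk W S a n k ∩ G) := by
    intro k
    rw [← measure_union ?_ ((Pk_meas hW S a n k).inter hGmeas)]
    · congr 1
      rw [← Set.inter_union_distrib_left]
      have : {ω | Yg W S n (2 ^ n) ω ≤ a} ∪ G = univ := by
        ext ω; simp only [hG, mem_union, mem_setOf_eq, mem_univ, iff_true]; exact le_or_gt _ _
      rw [this, inter_univ]
    · refine Set.disjoint_of_subset inter_subset_right inter_subset_right ?_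
      rw [Set.disjoint_left]
      intro ω h1 h2
      simp only [hG, mem_setOf_eq] at h1 h2
      exact absurd h2 (not_lt.2 h1)
  have hAg : ℙ (Ag W S a n) = ∑ k ∈ Finset.range (2 ^ n + 1), ℙ (Pk W S a n k) := by
    have := sum_Pk_inter hW S a n (T := univ) MeasurableSet.univ
    simpa using this.symm
  have hkey : ∀ k ∈ Finset.range (2 ^ n + 1),
      ℙ (Pk W S a n k ∩ {ω | Yg W S n (2 ^ n) ω ≤ a}) ≤ ℙ (Pk W S a n k ∩ G) := by
    intro k hk
    rcases lt_or_eq_of_le (Nat.lt_succ_iff.1 (Finset.mem_range.1 hk)) with h | h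
    · exact refl_upper hW hS a n h
    · subst h
      have : Pk W S a n (2 ^ n) ∩ {ω | Yg W S n (2 ^ n) ω ≤ a} = ∅ := by
        ext ω
        simp only [mem_inter_iff, mem_setOf_eq, mem_empty_iff_false, iff_false, not_and]
        intro hω
        exact not_le.2 hω.2
      rw [this]
      simp
  calc ℙ (Ag W S a n) = ∑ k ∈ Finset.range (2 ^ n + 1), ℙ (Pk W S a n k) := hAg
    _ = ∑ k ∈ Finset.range (2 ^ n + 1),
        (ℙ (Pk W S a n k ∩ {ω | Yg W S n (2 ^ n) ω ≤ a}) + ℙ (Pk W S a n k ∩ G)) := by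
        exact Finset.sum_congr rfl fun k _ => hsplit k
    _ = ∑ k ∈ Finset.range (2 ^ n + 1), ℙ (Pk W S a n k ∩ {ω | Yg W S n (2 ^ n) ω ≤ a})
        + ∑ k ∈ Finset.range (2 ^ n + 1), ℙ (Pk W S a n k ∩ G) := Finset.sum_add_distrib
    _ ≤ ∑ k ∈ Finset.range (2 ^ n + 1), ℙ (Pk W S a n k ∩ G)
        + ∑ k ∈ Finset.range (2 ^ n + 1), ℙ (Pk W S a n k ∩ G) := by
        exact add_le_add_left (Finset.sum_le_sum hkey) _
    _ = 2 * ∑ k ∈ Finset.range (2 ^ n + 1), ℙ (Pk W S a n k ∩ G) := (two_mul _).symm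
    _ = 2 * ℙ (Ag W S a n ∩ G) := by rw [sum_Pk_inter hW S a n hGmeas]
    _ = 2 * ℙ G := by rw [Set.inter_eq_self_of_subset_right (G_subset_Ag W S a n)]

lemma Pk_zero_empty (W : ℝ → Ω → ℝ) (S : ℝ) {a : ℝ} (ha : 0 < a) (n : ℕ) :
    Pk W S a n 0 = ∅ := by
  ext ω
  simp only [Pk, mem_setOf_eq, mem_empty_iff_false, iff_false, not_and]
  intro _
  have : Yg W S n 0 ω = 0 := by unfold Yg; rw [tg_zero]; exact sub_self _
  rw [this]
  exact not_lt.2 ha.le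

lemma grid_lower (hW : IsStandardBM W) {S : ℝ} (hS : 0 < S) {a : ℝ} (ha : 0 < a)
    {δ : ℝ} (hδ : 0 < δ) (n : ℕ) :
    2 * ℙ {ω | a < Yg W S n (2 ^ n) ω}
      ≤ ℙ (Ag W S a n)
        + (∫⁻ ω, min 1 (Mg W S (2 * (Real.sqrt (2 * Real.pi * δ))⁻¹) n ω) ∂ℙ)
        + ℙ (LCg W S a δ n) + ℙ (Pk W S a n (2 ^ n)) := by
  classical
  set c := 2 * (Real.sqrt (2 * Real.pi * δ))⁻¹ with hc
  set G := {ω | a < Yg W S n (2 ^ n) ω} with hG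
  set Gc := {ω | Yg W S n (2 ^ n) ω ≤ a} with hGc
  have hGmeas : MeasurableSet G := measurableSet_lt measurable_const (Yg_meas hW S n (2 ^ n))
  have hGcmeas : MeasurableSet Gc := measurableSet_le (Yg_meas hW S n (2 ^ n)) measurable_const
  set H : Ω → ℝ≥0∞ := fun ω => min 1 (Mg W S c n ω)
    + (LCg W S a δ n).indicator 1 ω + (Pk W S a n (2 ^ n)).indicator 1 ω with hH
  have hHmeas : Measurable H := by
    refine Measurable.add (Measurable.add ?_ ?_) ?_
    · exact measurable_const.min (Mg_meas hW S c n)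
    · exact measurable_one.indicator (LCg_meas hW S a δ n)
    · exact measurable_one.indicator (Pk_meas hW S a n (2 ^ n))
  have hkey : ∀ k ∈ Finset.range (2 ^ n + 1),
      ℙ (Pk W S a n k ∩ G) ≤ ℙ (Pk W S a n k ∩ Gc) + ∫⁻ ω in Pk W S a n k, H ω ∂ℙ := by
    intro k hkmem
    have hk2n : k ≤ 2 ^ n := Nat.lt_succ_iff.1 (Finset.mem_range.1 hkmem)
    rcases Nat.eq_zero_or_pos k with rfl | hk1
    · rw [Pk_zero_empty W S ha n]
      simp
    rcases lt_or_eq_of_le hk2n with hklt | hkeq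
    · by_cases hkδ : tg S n k ≤ S - δ
      · -- main reflection case
        refine le_trans (refl_lower hW hS a hδ n hk1 hklt hkδ) ?_
        refine add_le_add_right ?_ _
        refine setLIntegral_mono hHmeas fun ω _ => ?_
        refine le_trans ?_ (le_trans (self_le_add_right _ _) (self_le_add_right _ _))
        refine min_le_min le_rfl ?_
        have hmem : k - 1 ∈ Finset.range (2 ^ n) := Finset.mem_range.2 (by omega)
        have hle := le_iSup₂ (f := fun (i : ℕ) (_ : i ∈ Finset.range (2 ^ n)) =>
          ENNReal.ofReal (c * (Yg W S n (i + 1) ω - Yg W S n i ω))) (k - 1) hmem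
        rw [show k - 1 + 1 = k by omega] at hle
        exact hle
      · -- late crossing case
        have hsub : Pk W S a n k ⊆ LCg W S a δ n := by
          intro ω hω
          constructor
          · intro j _ hj
            have hjk : j < k := by
              by_contra hcon
              have := tg_mono hS.le n (not_lt.1 hcon)
              exact hkδ (le_trans this hj)
            exact hω.1 j hjk
          · exact ⟨k, hklt, not_le.1 hkδ, hω.2⟩
        calc ℙ (Pk W S a n k ∩ G) ≤ ℙ (Pk W S a n k) := measure_mono inter_subset_left
          _ = ∫⁻ ω in Pk W S a n k, 1 ∂ℙ := (setLIntegral_one _).symm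
          _ ≤ ∫⁻ ω in Pk W S a n k, H ω ∂ℙ := by
              refine setLIntegral_mono hHmeas fun ω hω => ?_
              have h1 : (LCg W S a δ n).indicator (1 : Ω → ℝ≥0∞) ω = 1 :=
                indicator_of_mem (hsub hω) 1
              rw [hH]
              calc (1:ℝ≥0∞) = (LCg W S a δ n).indicator 1 ω := h1.symm
                _ ≤ _ := le_trans (self_le_add_left _ _) (self_le_add_right _ _)
          _ ≤ _ := le_add_self
    · -- k = 2^n
      subst hkeq
      calc ℙ (Pk W S a n (2 ^ n) ∩ G) ≤ ℙ (Pk W S a n (2 ^ n)) := measure_mono inter_subset_left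
        _ = ∫⁻ ω in Pk W S a n (2 ^ n), 1 ∂ℙ := (setLIntegral_one _).symm
        _ ≤ ∫⁻ ω in Pk W S a n (2 ^ n), H ω ∂ℙ := by
            refine setLIntegral_mono hHmeas fun ω hω => ?_
            have h1 : (Pk W S a n (2 ^ n)).indicator (1 : Ω → ℝ≥0∞) ω = 1 :=
              indicator_of_mem hω 1
            rw [hH]
            calc (1:ℝ≥0∞) = (Pk W S a n (2 ^ n)).indicator 1 ω := h1.symm
              _ ≤ _ := self_le_add_left _ _
        _ ≤ _ := le_add_self
  have hsumH : ∑ k ∈ Finset.range (2 ^ n + 1), ∫⁻ ω in Pk W S a n k, H ω ∂ℙ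
      ≤ (∫⁻ ω, min 1 (Mg W S c n ω) ∂ℙ) + ℙ (LCg W S a δ n) + ℙ (Pk W S a n (2 ^ n)) := by
    have h1 : ∑ k ∈ Finset.range (2 ^ n + 1), ∫⁻ ω in Pk W S a n k, H ω ∂ℙ
        = ∫⁻ ω in ⋃ k ∈ Finset.range (2 ^ n + 1), Pk W S a n k, H ω ∂ℙ := by
      rw [lintegral_biUnion_finset ?_ (fun k _ => Pk_meas hW S a n k) H]
      intro j _ k _ hjk
      exact Pk_pairwise_disjoint W S a n hjk
    rw [h1]
    refine le_trans (setLIntegral_le_lintegral _ _) ?_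
    rw [hH]
    rw [lintegral_add_right _ (measurable_one.indicator (Pk_meas hW S a n (2 ^ n))),
      lintegral_add_right _ (measurable_one.indicator (LCg_meas hW S a δ n)),
      lintegral_indicator_one (LCg_meas hW S a δ n),
      lintegral_indicator_one (Pk_meas hW S a n (2 ^ n))]
  have hGA : ℙ G = ℙ (Ag W S a n ∩ G) := by
    rw [Set.inter_eq_self_of_subset_right (G_subset_Ag W S a n)]
  have hAgsplit : ℙ (Ag W S a n ∩ G) + ℙ (Ag W S a n ∩ Gc) = ℙ (Ag W S a n) := by
    rw [← measure_union ?_ ((Ag_meas hW S a n).inter hGcmeas)]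
    · congr 1
      rw [← Set.inter_union_distrib_left]
      have : G ∪ Gc = univ := by
        ext ω; simp only [hG, hGc, mem_union, mem_setOf_eq, mem_univ, iff_true]
        exact lt_or_ge _ _
      rw [this, inter_univ]
    · refine Set.disjoint_of_subset inter_subset_right inter_subset_right ?_
      rw [Set.disjoint_left]
      intro ω h1 h2
      simp only [hG, hGc, mem_setOf_eq] at h1 h2
      exact absurd h1 (not_lt.2 h2)
  calc 2 * ℙ G = ℙ G + ℙ G := two_mul _
    _ = ℙ G + ∑ k ∈ Finset.range (2 ^ n + 1), ℙ (Pk W S a n k ∩ G) := by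
        rw [sum_Pk_inter hW S a n hGmeas, ← hGA]
    _ ≤ ℙ G + ∑ k ∈ Finset.range (2 ^ n + 1),
          (ℙ (Pk W S a n k ∩ Gc) + ∫⁻ ω in Pk W S a n k, H ω ∂ℙ) := by
        exact add_le_add_right (Finset.sum_le_sum hkey) _
    _ = ℙ G + (∑ k ∈ Finset.range (2 ^ n + 1), ℙ (Pk W S a n k ∩ Gc)
          + ∑ k ∈ Finset.range (2 ^ n + 1), ∫⁻ ω in Pk W S a n k, H ω ∂ℙ) := by
        rw [Finset.sum_add_distrib]
    _ = (ℙ (Ag W S a n ∩ G) + ℙ (Ag W S a n ∩ Gc))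
          + ∑ k ∈ Finset.range (2 ^ n + 1), ∫⁻ ω in Pk W S a n k, H ω ∂ℙ := by
        rw [sum_Pk_inter hW S a n hGcmeas, hGA]; ring
    _ ≤ ℙ (Ag W S a n)
          + ((∫⁻ ω, min 1 (Mg W S c n ω) ∂ℙ) + ℙ (LCg W S a δ n) + ℙ (Pk W S a n (2 ^ n))) := by
        rw [hAgsplit]
        exact add_le_add_right hsumH _
    _ = _ := by ring

lemma Yg_double (W : ℝ → Ω → ℝ) (S : ℝ) (n k : ℕ) :
    Yg W S n k = Yg W S (n + 1) (2 * k) := by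
  unfold Yg; rw [tg_double]

lemma Yg_top (W : ℝ → Ω → ℝ) (S : ℝ) (n : ℕ) :
    Yg W S n (2 ^ n) = fun ω => W S ω - W 0 ω := by
  unfold Yg; rw [tg_top]

lemma Ag_mono (W : ℝ → Ω → ℝ) (S a : ℝ) : Monotone (fun n => Ag W S a n) := by
  apply monotone_nat_of_le_succ
  intro n ω hω
  obtain ⟨k, hk, hY⟩ := hω
  refine ⟨2 * k, ?_, ?_⟩
  · rw [pow_succ]; omega
  · rw [← Yg_double]; exact hY

lemma Bg_anti (W : ℝ → Ω → ℝ) (S a : ℝ) :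
    Antitone (fun n => Pk W S a n (2 ^ n)) := by
  apply antitone_nat_of_succ_le
  intro n ω hω
  constructor
  · intro j hj
    rw [Yg_double]
    exact hω.1 (2 * j) (by rw [pow_succ]; omega)
  · have h1 : Yg W S n (2 ^ n) ω = Yg W S (n + 1) (2 ^ (n + 1)) ω := by
      rw [Yg_top, Yg_top]
    rw [h1]
    exact hω.2

lemma err_tendsto (hW : IsStandardBM W) {S : ℝ} (hS : 0 < S) {c : ℝ} (hc : 0 ≤ c) :
    Tendsto (fun n => ∫⁻ ω, min 1 (Mg W S c n ω) ∂ℙ) atTop (𝓝 0) := by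
  have hae : ∀ᵐ ω ∂ℙ, Tendsto (fun n => min 1 (Mg W S c n ω)) atTop (𝓝 0) := by
    filter_upwards [hW.cont] with ω hcont
    have hc2 : ContinuousOn (fun t => W t ω) (Icc 0 S) :=
      hcont.mono (fun x hx => hx.1)
    have hu := isCompact_Icc.uniformContinuousOn_of_continuous hc2
    rw [Metric.uniformContinuousOn_iff] at hu
    have hMg : Tendsto (fun n => Mg W S c n ω) atTop (𝓝 0) := by
      rw [ENNReal.tendsto_atTop_zero]
      intro ε hε
      set ε' := min 1 ε with hε'
      have hε'pos : 0 < ε' := lt_min one_pos hε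
      have hε'top : ε' ≠ ⊤ := ne_top_of_le_ne_top ENNReal.one_ne_top (min_le_left _ _)
      set e := ε'.toReal with he'
      have he : 0 < e := ENNReal.toReal_pos hε'pos.ne' hε'top
      obtain ⟨d, hd, hdd⟩ := hu (e / (c + 1)) (by positivity)
      obtain ⟨N, hN⟩ : ∃ N : ℕ, S / d < 2 ^ N := pow_unbounded_of_one_lt (S / d) one_lt_two
      refine ⟨N, fun n hn => ?_⟩
      have h2n : (0:ℝ) < 2 ^ n := by positivity
      have hSd : S / 2 ^ n < d := by
        rw [div_lt_iff₀ hd] at hN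
        rw [div_lt_iff₀ h2n]
        have h2 : (2:ℝ) ^ N ≤ 2 ^ n := by
          apply pow_le_pow_right₀ one_le_two hn
        nlinarith
      have hbound : Mg W S c n ω ≤ ENNReal.ofReal e := by
        refine iSup₂_le fun i hi => ?_
        have hi' : i < 2 ^ n := Finset.mem_range.1 hi
        refine ENNReal.ofReal_le_ofReal ?_
        have hm1 : tg S n (i + 1) ∈ Icc 0 S :=
          ⟨tg_nonneg hS.le n _, tg_le hS.le hi'⟩
        have hm2 : tg S n i ∈ Icc 0 S :=
          ⟨tg_nonneg hS.le n _, tg_le hS.le (le_of_lt (Nat.lt_of_lt_of_le hi' (by omega)))⟩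
        have hdist : dist (tg S n (i + 1)) (tg S n i) < d := by
          rw [Real.dist_eq, tg_diff, abs_of_pos (by positivity)]
          exact hSd
        have hWd := hdd _ hm1 _ hm2 hdist
        rw [Real.dist_eq] at hWd
        have hdiff : Yg W S n (i + 1) ω - Yg W S n i ω ≤ e / (c + 1) := by
          have : Yg W S n (i + 1) ω - Yg W S n i ω
              = W (tg S n (i + 1)) ω - W (tg S n i) ω := by unfold Yg; ring
          rw [this]
          exact le_trans (le_abs_self _) hWd.le
        have : c * (Yg W S n (i + 1) ω - Yg W S n i ω) ≤ c * (e / (c + 1)) :=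
          mul_le_mul_of_nonneg_left hdiff hc
        refine le_trans this ?_
        rw [mul_div_assoc'] -- c * e / (c+1)
        rw [div_le_iff₀ (by positivity)]
        nlinarith
      refine le_trans hbound ?_
      rw [ENNReal.ofReal_toReal hε'top]
      exact min_le_right _ _
    exact tendsto_of_tendsto_of_tendsto_of_le_of_le tendsto_const_nhds hMg
      (fun n => zero_le) (fun n => min_le_right _ _)
  have hdct := tendsto_lintegral_of_dominated_convergence (μ := ℙ)
    (F := fun n ω => min 1 (Mg W S c n ω)) (f := fun _ => 0) (bound := fun _ => 1)
    (fun n => measurable_const.min (Mg_meas hW S c n))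
    (fun n => Filter.Eventually.of_forall (fun ω => min_le_left _ _))
    (by simp)
    hae
  simpa using hdct

lemma Bg_lim (hW : IsStandardBM W) {S : ℝ} (hS : 0 < S) (a : ℝ) :
    Tendsto (fun n => ℙ (Pk W S a n (2 ^ n))) atTop (𝓝 0) := by
  have hnull : ℙ (⋂ n, Pk W S a n (2 ^ n)) = 0 := by
    have hbad : ℙ {ω | ¬ (W 0 ω = 0 ∧ ContinuousOn (fun t => W t ω) (Set.Ici 0))} = 0 := by
      refine measure_eq_zero_iff_ae_notMem.2 ?_
      filter_upwards [hW.init.and hW.cont] with ω hω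
      simp only [mem_setOf_eq, not_not]
      exact hω
    refine measure_mono_null ?_ hbad
    intro ω hω hgood
    obtain ⟨hW0, hcont⟩ := hgood
    have hmem : ∀ n, ω ∈ Pk W S a n (2 ^ n) := fun n => mem_iInter.1 hω n
    have hWS : a < W S ω := by
      have h2 := (hmem 0).2
      rw [Yg_top] at h2
      simp only [hW0, sub_zero] at h2
      exact h2
    -- the points t_m = S - S/2^m converge to S with W ≤ a there
    have hseq : ∀ m : ℕ, W (tg S m (2 ^ m - 1)) ω ≤ a := by
      intro m
      have h1 := (hmem m).1 (2 ^ m - 1) (by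
        have : 0 < 2 ^ m := Nat.pow_pos (by norm_num)
        omega)
      unfold Yg at h1
      rwa [hW0, sub_zero] at h1
    have htend : Tendsto (fun m => tg S m (2 ^ m - 1)) atTop (𝓝 S) := by
      have he : ∀ m : ℕ, tg S m (2 ^ m - 1) = S - S / 2 ^ m := by
        intro m
        have h1 : (2 ^ m - 1 : ℕ) + 1 = 2 ^ m := by
          have : 0 < 2 ^ m := Nat.pow_pos (by norm_num)
          omega
        have := tg_diff S m (2 ^ m - 1)
        rw [h1, tg_top] at this
        linarith
      simp_rw [he]
      have h0 : Tendsto (fun m : ℕ => S / 2 ^ m) atTop (𝓝 0) := by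
        simp_rw [div_eq_mul_inv, ← inv_pow]
        rw [show (0:ℝ) = S * 0 by ring]
        exact Tendsto.const_mul S (tendsto_pow_atTop_nhds_zero_of_lt_one
          (by norm_num) (by norm_num))
      have := Tendsto.const_sub S h0
      simpa using this
    have hWcont : Tendsto (fun m => W (tg S m (2 ^ m - 1)) ω) atTop (𝓝 (W S ω)) := by
      have hSc : ContinuousWithinAt (fun t => W t ω) (Ici 0) S :=
        hcont S (le_of_lt hS)
      refine hSc.tendsto.comp ?_
      refine tendsto_nhdsWithin_of_tendsto_nhds_of_eventually_within _ htend ?_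
      exact Filter.Eventually.of_forall (fun m => tg_nonneg hS.le m _)
    have hle : W S ω ≤ a := le_of_tendsto hWcont (Filter.Eventually.of_forall hseq)
    linarith
  have htend := tendsto_measure_iInter_atTop (μ := ℙ)
    (fun n => (Pk_meas hW S a n (2 ^ n)).nullMeasurableSet)
    (Bg_anti W S a) ⟨0, measure_ne_top ℙ _⟩
  rw [hnull] at htend
  exact htend

/-- "no early crossing" event -/
def Eg (W : ℝ → Ω → ℝ) (S a δ : ℝ) (n : ℕ) : Set Ω :=
  {ω | ∀ j ≤ 2 ^ n, tg S n j ≤ S - δ → Yg W S n j ω ≤ a}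

/-- "crossing strictly inside the last δ-window (at any dyadic level)" -/
def Fg (W : ℝ → Ω → ℝ) (S a δ : ℝ) : Set Ω :=
  ⋃ m, {ω | ∃ k < 2 ^ m, S - δ < tg S m k ∧ a < Yg W S m k ω}

lemma Eg_meas (hW : IsStandardBM W) (S a δ : ℝ) (n : ℕ) : MeasurableSet (Eg W S a δ n) := by
  rw [show Eg W S a δ n
      = ⋂ j ∈ Set.Iic (2 ^ n), ⋂ (_ : tg S n j ≤ S - δ), {ω | Yg W S n j ω ≤ a} by
    ext ω; simp [Eg]]
  exact MeasurableSet.biInter (to_countable _) fun j _ =>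
    MeasurableSet.iInter fun _ => measurableSet_le (Yg_meas hW S n j) measurable_const

lemma Fg_meas (hW : IsStandardBM W) (S a δ : ℝ) : MeasurableSet (Fg W S a δ) := by
  refine MeasurableSet.iUnion fun m => ?_
  rw [show {ω | ∃ k < 2 ^ m, S - δ < tg S m k ∧ a < Yg W S m k ω}
      = ⋃ k ∈ Set.Iio (2 ^ m), ⋃ (_ : S - δ < tg S m k), {ω | a < Yg W S m k ω} by
    ext ω; simp; tauto]
  exact MeasurableSet.biUnion (to_countable _) fun k _ =>
    MeasurableSet.iUnion fun _ => measurableSet_lt measurable_const (Yg_meas hW S m k)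

lemma LCg_subset (W : ℝ → Ω → ℝ) (S a δ : ℝ) (n : ℕ) :
    LCg W S a δ n ⊆ Eg W S a δ n ∩ Fg W S a δ := by
  rintro ω ⟨h1, h2⟩
  exact ⟨h1, mem_iUnion.2 ⟨n, h2⟩⟩

lemma Eg_anti (W : ℝ → Ω → ℝ) (S a δ : ℝ) : Antitone (fun n => Eg W S a δ n) := by
  apply antitone_nat_of_succ_le
  intro n ω hω j hj htg
  have h1 : tg S n j = tg S (n + 1) (2 * j) := tg_double S n j
  have h2 : Yg W S n j ω = Yg W S (n + 1) (2 * j) ω := by rw [Yg_double]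
  rw [h2]
  exact hω (2 * j) (by rw [pow_succ]; omega) (by rw [← h1]; exact htg)

lemma Hδ_inter_empty {S : ℝ} (hS : 0 < S) (a : ℝ) :
    (⋂ j : ℕ, ((⋂ n, Eg W S a (S / (j + 2)) n) ∩ Fg W S a (S / (j + 2)))) = ∅ := by
  ext ω
  simp only [mem_iInter, mem_inter_iff, mem_empty_iff_false, iff_false]
  intro hcon
  obtain ⟨m, hm⟩ := mem_iUnion.1 (hcon 0).2
  obtain ⟨k, hk, htg, hY⟩ := hm
  have htgS : tg S m k < S := by
    have := tg_strictMono hS m hk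
    rwa [tg_top] at this
  obtain ⟨j, hj⟩ := exists_nat_gt (S / (S - tg S m k))
  have hSpos : 0 < S - tg S m k := by linarith
  have hδj : S / (j + 2) ≤ S - tg S m k := by
    rw [div_le_iff₀ (by positivity)]
    rw [div_lt_iff₀ hSpos] at hj
    nlinarith
  have hE := (hcon j).1
  have := hE m k hk.le (by linarith)
  linarith

lemma EgFg_lim (hW : IsStandardBM W) {S : ℝ} (hS : 0 < S) (a : ℝ) :
    Tendsto (fun j : ℕ => ℙ ((⋂ n, Eg W S a (S / (j + 2)) n) ∩ Fg W S a (S / (j + 2))))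
      atTop (𝓝 0) := by
  have hanti : Antitone (fun j : ℕ =>
      (⋂ n, Eg W S a (S / (j + 2)) n) ∩ Fg W S a (S / (j + 2))) := by
    intro j j' hjj
    have hδ : S / (j' + 2) ≤ S / (j + 2) := by
      have hcast : (j:ℝ) ≤ j' := Nat.cast_le.2 hjj
      apply div_le_div_of_nonneg_left hS.le (by positivity)
      linarith
    refine Set.inter_subset_inter ?_ ?_
    · refine Set.iInter_mono fun n => ?_
      intro ω hω i hi htg
      exact hω i hi (by linarith)
    · refine Set.iUnion_mono fun m => ?_
      rintro ω ⟨k, hk, h1, h2⟩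
      exact ⟨k, hk, by linarith, h2⟩
  have htend := tendsto_measure_iInter_atTop (μ := ℙ)
    (fun j => ((MeasurableSet.iInter fun n => Eg_meas hW S a _ n).inter
      (Fg_meas hW S a _)).nullMeasurableSet)
    hanti ⟨0, measure_ne_top ℙ _⟩
  rw [Hδ_inter_empty hS a, measure_empty] at htend
  exact htend

lemma crossing_prob (hW : IsStandardBM W) {S : ℝ} (hS : 0 < S) {a : ℝ} (ha : 0 < a) :
    ℙ (⋃ n, Ag W S a n) = 2 * ℙ {ω | a < W S ω - W 0 ω} := by
  set GS := {ω | a < W S ω - W 0 ω} with hGS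
  have hGn : ∀ n, {ω | a < Yg W S n (2 ^ n) ω} = GS := by
    intro n; ext ω; rw [hGS, mem_setOf_eq, mem_setOf_eq, Yg_top]
  have hAtend : Tendsto (fun n => ℙ (Ag W S a n)) atTop (𝓝 (ℙ (⋃ n, Ag W S a n))) :=
    tendsto_measure_iUnion_atTop (Ag_mono W S a)
  refine le_antisymm ?_ ?_
  · refine le_of_tendsto hAtend (Filter.Eventually.of_forall fun n => ?_)
    have := grid_upper hW hS a n
    rwa [hGn n] at this
  · have key : ∀ j : ℕ, 2 * ℙ GS ≤ ℙ (⋃ n, Ag W S a n)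
        + ℙ ((⋂ n, Eg W S a (S / (j + 2)) n) ∩ Fg W S a (S / (j + 2))) := by
      intro j
      set δ := S / (j + 2) with hδdef
      have hδ : 0 < δ := by positivity
      set c := 2 * (Real.sqrt (2 * Real.pi * δ))⁻¹ with hcdef
      have hc : 0 ≤ c := by positivity
      have hineq : ∀ n, 2 * ℙ GS ≤ ℙ (Ag W S a n)
          + (∫⁻ ω, min 1 (Mg W S c n ω) ∂ℙ)
          + ℙ (Eg W S a δ n ∩ Fg W S a δ) + ℙ (Pk W S a n (2 ^ n)) := by
        intro n
        have h1 := grid_lower hW hS ha hδ n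
        rw [hGn n] at h1
        refine le_trans h1 ?_
        exact add_le_add (add_le_add le_rfl
          (measure_mono (LCg_subset W S a δ n))) le_rfl
      have hItend := err_tendsto hW hS hc
      have hGtend : Tendsto (fun n => ℙ (Eg W S a δ n ∩ Fg W S a δ)) atTop
          (𝓝 (ℙ ((⋂ n, Eg W S a δ n) ∩ Fg W S a δ))) := by
        have := tendsto_measure_iInter_atTop (μ := ℙ)
          (fun n => ((Eg_meas hW S a δ n).inter (Fg_meas hW S a δ)).nullMeasurableSet)
          (fun n n' hnn => Set.inter_subset_inter ((Eg_anti W S a δ) hnn) subset_rfl)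
          ⟨0, measure_ne_top ℙ _⟩
        have hseteq : (⋂ n, (Eg W S a δ n ∩ Fg W S a δ))
            = (⋂ n, Eg W S a δ n) ∩ Fg W S a δ := by
          ext ω
          simp only [mem_iInter, mem_inter_iff]
          exact ⟨fun h => ⟨fun n => (h n).1, (h 0).2⟩, fun h n => ⟨h.1 n, h.2⟩⟩
        rwa [hseteq] at this
      have hBtend := Bg_lim hW hS a
      have hsum : Tendsto (fun n => ℙ (Ag W S a n)
          + (∫⁻ ω, min 1 (Mg W S c n ω) ∂ℙ)
          + ℙ (Eg W S a δ n ∩ Fg W S a δ) + ℙ (Pk W S a n (2 ^ n))) atTop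
          (𝓝 (ℙ (⋃ n, Ag W S a n) + 0
            + ℙ ((⋂ n, Eg W S a δ n) ∩ Fg W S a δ) + 0)) := by
        refine Tendsto.add (Tendsto.add (Tendsto.add hAtend hItend) hGtend) hBtend
      have hle := ge_of_tendsto hsum (Filter.Eventually.of_forall hineq)
      simpa using hle
    have hHtend := EgFg_lim hW hS a
    have hsum2 : Tendsto (fun j : ℕ => ℙ (⋃ n, Ag W S a n)
        + ℙ ((⋂ n, Eg W S a (S / (j + 2)) n) ∩ Fg W S a (S / (j + 2)))) atTop
        (𝓝 (ℙ (⋃ n, Ag W S a n) + 0)) :=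
      Tendsto.add tendsto_const_nhds hHtend
    have := ge_of_tendsto hsum2 (Filter.Eventually.of_forall key)
    simpa using this

lemma Ag_anti_in_a (W : ℝ → Ω → ℝ) (S : ℝ) {a a' : ℝ} (h : a ≤ a') (n : ℕ) :
    Ag W S a' n ⊆ Ag W S a n := by
  rintro ω ⟨k, hk, hY⟩
  exact ⟨k, hk, lt_of_le_of_lt h hY⟩

lemma am_tendsto {a : ℝ} : Tendsto (fun m : ℕ => a - a / (m + 2)) atTop (𝓝 a) := by
  have h0 : Tendsto (fun m : ℕ => a / (m + 2)) atTop (𝓝 0) := by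
    apply Tendsto.div_atTop tendsto_const_nhds
    apply Filter.tendsto_atTop_add_const_right
    exact tendsto_natCast_atTop_atTop
  have := Tendsto.const_sub a h0
  simpa using this

lemma sup_lt_prob (hW : IsStandardBM W) {S a : ℝ} (hS : 0 < S) (ha : 0 < a) :
    ℙ {ω | ∀ u ∈ Icc (0:ℝ) S, W u ω < a}
      = 1 - 2 * gaussianReal 0 (Real.toNNReal S) (Ioi a) := by
  classical
  set am : ℕ → ℝ := fun m => a - a / (m + 2) with ham
  have ham_pos : ∀ m, 0 < am m := by
    intro m
    show (0:ℝ) < a - a / (↑m + 2)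
    have h1 : a / ((m:ℝ) + 2) < a := by
      rw [div_lt_iff₀ (by positivity)]
      nlinarith
    linarith
  have ham_lt : ∀ m, am m < a := by
    intro m
    show a - a / ((m:ℝ) + 2) < a
    have : 0 < a / ((m:ℝ) + 2) := by positivity
    linarith
  have ham_mono : Monotone am := by
    intro m m' hmm
    show a - a / ((m:ℝ) + 2) ≤ a - a / ((m':ℝ) + 2)
    have hcast : (m:ℝ) ≤ m' := Nat.cast_le.2 hmm
    have : a / ((m':ℝ) + 2) ≤ a / ((m:ℝ) + 2) :=
      div_le_div_of_nonneg_left ha.le (by positivity) (by linarith)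
    linarith
  set M : Set Ω := ⋂ m, ⋃ n, Ag W S (am m) n with hM
  have hMmeas : MeasurableSet M :=
    MeasurableSet.iInter fun m => MeasurableSet.iUnion fun n => Ag_meas hW S (am m) n
  -- a.e. identification
  have hae : ({ω | ∀ u ∈ Icc (0:ℝ) S, W u ω < a} : Set Ω) =ᵐ[ℙ] (Mᶜ : Set Ω) := by
    rw [Filter.eventuallyEq_set]
    filter_upwards [hW.init, hW.cont] with ω hW0 hcont
    show (∀ u ∈ Icc (0:ℝ) S, W u ω < a) ↔ ω ∉ M
    constructor
    · -- all below a → not in M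
      intro hlt hMem
      obtain ⟨u0, hu0, hmax⟩ := isCompact_Icc.exists_isMaxOn
        (nonempty_Icc.2 hS.le) (hcont.mono (fun x (hx : x ∈ Icc 0 S) => hx.1))
      have hkey : ∀ m, am m < W u0 ω := by
        intro m
        obtain ⟨n, hn⟩ := mem_iUnion.1 (mem_iInter.1 hMem m)
        obtain ⟨k, hk, hY⟩ := hn
        have htg : tg S n k ∈ Icc (0:ℝ) S := ⟨tg_nonneg hS.le n k, tg_le hS.le hk⟩
        have : Yg W S n k ω = W (tg S n k) ω := by unfold Yg; rw [hW0, sub_zero]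
        rw [this] at hY
        exact lt_of_lt_of_le hY (hmax htg)
      have : a ≤ W u0 ω := le_of_tendsto am_tendsto
        (Filter.Eventually.of_forall fun m => (hkey m).le)
      exact absurd (hlt u0 hu0) (not_lt.2 this)
    · -- not in M → all below a
      intro hMem u hu
      obtain ⟨m, hm⟩ := by
        rw [hM] at hMem
        rw [mem_iInter] at hMem
        exact not_forall.1 hMem
      have hub : ∀ n, ∀ k ≤ 2 ^ n, W (tg S n k) ω ≤ am m := by
        intro n k hk
        by_contra hcon
        refine hm (mem_iUnion.2 ⟨n, ⟨k, hk, ?_⟩⟩)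
        have : Yg W S n k ω = W (tg S n k) ω := by unfold Yg; rw [hW0, sub_zero]
        rw [this]
        exact not_le.1 hcon
      -- approximate u by dyadic grid points from below
      have happrox : Tendsto (fun n : ℕ => tg S n (⌊u * 2 ^ n / S⌋₊)) atTop (𝓝 u) := by
        have hbound : ∀ n : ℕ, u - S / 2 ^ n ≤ tg S n (⌊u * 2 ^ n / S⌋₊) ∧
            tg S n (⌊u * 2 ^ n / S⌋₊) ≤ u := by
          intro n
          have h2n : (0:ℝ) < 2 ^ n := by positivity
          have hnonneg : 0 ≤ u * 2 ^ n / S := by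
            apply div_nonneg (mul_nonneg hu.1 h2n.le) hS.le
          constructor
          · have hfl : u * 2 ^ n / S < ⌊u * 2 ^ n / S⌋₊ + 1 := Nat.lt_floor_add_one _
            unfold tg
            rw [sub_le_iff_le_add, div_add' _ _ _ (ne_of_gt h2n)]
            rw [le_div_iff₀ h2n]
            have h3 : u * 2 ^ n / S < ⌊u * 2 ^ n / S⌋₊ + 1 := hfl
            have h4 : u * 2 ^ n < (⌊u * 2 ^ n / S⌋₊ + 1) * S := by
              rw [div_lt_iff₀ hS] at h3
              linarith
            have h5 : S / 2 ^ n * 2 ^ n = S := div_mul_cancel₀ _ (ne_of_gt h2n)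
            nlinarith [h5]
          · have hfl : (⌊u * 2 ^ n / S⌋₊ : ℝ) ≤ u * 2 ^ n / S := Nat.floor_le hnonneg
            unfold tg
            rw [div_le_iff₀ h2n]
            rw [le_div_iff₀ hS] at hfl
            nlinarith
        have hS2 : Tendsto (fun n : ℕ => u - S / 2 ^ n) atTop (𝓝 u) := by
          have h0 : Tendsto (fun n : ℕ => S / 2 ^ n) atTop (𝓝 0) := by
            simp_rw [div_eq_mul_inv, ← inv_pow]
            rw [show (0:ℝ) = S * 0 by ring]
            exact Tendsto.const_mul S (tendsto_pow_atTop_nhds_zero_of_lt_one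
              (by norm_num) (by norm_num))
          have := Tendsto.const_sub u h0
          simpa using this
        exact tendsto_of_tendsto_of_tendsto_of_le_of_le hS2 tendsto_const_nhds
          (fun n => (hbound n).1) (fun n => (hbound n).2)
      have hfloor_le : ∀ n : ℕ, ⌊u * 2 ^ n / S⌋₊ ≤ 2 ^ n := by
        intro n
        have h2n : (0:ℝ) < 2 ^ n := by positivity
        have : u * 2 ^ n / S ≤ 2 ^ n := by
          rw [div_le_iff₀ hS]
          nlinarith [hu.2]
        calc ⌊u * 2 ^ n / S⌋₊ ≤ ⌊(2 ^ n : ℝ)⌋₊ := Nat.floor_le_floor this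
          _ = 2 ^ n := by
              rw [show ((2:ℝ) ^ n) = ((2 ^ n : ℕ) : ℝ) by push_cast; ring, Nat.floor_natCast]
      have hWlim : Tendsto (fun n : ℕ => W (tg S n (⌊u * 2 ^ n / S⌋₊)) ω) atTop
          (𝓝 (W u ω)) := by
        have huc : ContinuousWithinAt (fun t => W t ω) (Ici 0) u := hcont u hu.1
        refine huc.tendsto.comp ?_
        refine tendsto_nhdsWithin_of_tendsto_nhds_of_eventually_within _ happrox ?_
        exact Filter.Eventually.of_forall (fun n => tg_nonneg hS.le n _)
      have : W u ω ≤ am m := le_of_tendsto hWlim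
        (Filter.Eventually.of_forall fun n => hub n _ (hfloor_le n))
      exact lt_of_le_of_lt this (ham_lt m)
  rw [measure_congr hae, prob_compl_eq_one_sub hMmeas]
  have hPM : ℙ M = 2 * gaussianReal 0 (Real.toNNReal S) (Ioi a) := by
    have hMlim : Tendsto (fun m => ℙ (⋃ n, Ag W S (am m) n)) atTop (𝓝 (ℙ M)) := by
      refine tendsto_measure_iInter_atTop (μ := ℙ)
        (fun m => (MeasurableSet.iUnion fun n => Ag_meas hW S (am m) n).nullMeasurableSet)
        ?_ ⟨0, measure_ne_top ℙ _⟩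
      intro m m' hmm
      exact Set.iUnion_mono fun n => Ag_anti_in_a W S (ham_mono hmm) n
    have hval : ∀ m, ℙ (⋃ n, Ag W S (am m) n) = 2 * ℙ {ω | am m < W S ω - W 0 ω} :=
      fun m => crossing_prob hW hS (ham_pos m)
    have hDlim : Tendsto (fun m => ℙ {ω | am m < W S ω - W 0 ω}) atTop
        (𝓝 (ℙ {ω | a ≤ W S ω - W 0 ω})) := by
      have hset : (⋂ m, {ω | am m < W S ω - W 0 ω}) = {ω | a ≤ W S ω - W 0 ω} := by
        ext ω
        simp only [mem_iInter, mem_setOf_eq]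
        constructor
        · intro h
          exact le_of_tendsto am_tendsto (Filter.Eventually.of_forall fun m => (h m).le)
        · intro h m
          exact lt_of_lt_of_le (ham_lt m) h
      have hanti : Antitone (fun m : ℕ => {ω | am m < W S ω - W 0 ω}) := by
        intro m m' hmm ω hω
        simp only [mem_setOf_eq] at hω ⊢
        exact lt_of_le_of_lt (ham_mono hmm) hω
      have htnd := tendsto_measure_iInter_atTop (μ := ℙ)
        (fun m => (measurableSet_lt measurable_const
          (show Measurable fun ω => W S ω - W 0 ω from (hW.meas S).sub (hW.meas 0))).nullMeasurableSet)
        hanti ⟨0, measure_ne_top ℙ _⟩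
      rwa [hset] at htnd
    have hMlim2 : Tendsto (fun m => 2 * ℙ {ω | am m < W S ω - W 0 ω}) atTop (𝓝 (ℙ M)) := by
      have : (fun m => ℙ (⋃ n, Ag W S (am m) n))
          = fun m => 2 * ℙ {ω | am m < W S ω - W 0 ω} := funext hval
      rwa [this] at hMlim
    have hconst : Tendsto (fun m => 2 * ℙ {ω | am m < W S ω - W 0 ω}) atTop
        (𝓝 (2 * ℙ {ω | a ≤ W S ω - W 0 ω})) :=
      ENNReal.Tendsto.const_mul hDlim (Or.inr ENNReal.ofNat_ne_top)
    have hPM2 : ℙ M = 2 * ℙ {ω | a ≤ W S ω - W 0 ω} := tendsto_nhds_unique hMlim2 hconst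
    have hmap : ℙ {ω | a ≤ W S ω - W 0 ω} = gaussianReal 0 (Real.toNNReal S) (Ici a) := by
      have h1 := hW.gauss_incr 0 S le_rfl hS.le
      rw [sub_zero] at h1
      have h2 : {ω | a ≤ W S ω - W 0 ω} = (fun ω => W S ω - W 0 ω) ⁻¹' (Ici a) := rfl
      rw [h2, ← Measure.map_apply (show Measurable fun ω => W S ω - W 0 ω from (hW.meas S).sub (hW.meas 0)) measurableSet_Ici, h1]
    have hS0 : Real.toNNReal S ≠ 0 := by
      rw [Ne, Real.toNNReal_eq_zero]; exact not_le.2 hS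
    have hIci : gaussianReal 0 (Real.toNNReal S) (Ici a)
        = gaussianReal 0 (Real.toNNReal S) (Ioi a) := by
      refine le_antisymm ?_ (measure_mono Ioi_subset_Ici_self)
      have hdecomp : Ici a = Ioi a ∪ {a} := by
        ext x
        simp only [mem_Ici, mem_union, mem_Ioi, mem_singleton_iff]
        constructor
        · intro h; rcases lt_or_eq_of_le h with h | h
          · exact Or.inl h
          · exact Or.inr h.symm
        · rintro (h | rfl); exacts [h.le, le_rfl]
      rw [hdecomp]
      refine le_trans (measure_union_le _ _) ?_
      rw [gauss_singleton hS0, add_zero]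
    rw [hPM2, hmap, hIci]
  rw [hPM]

end withOmega

end BMaux

/-- Explicit one-sided boundary non-crossing probability for the growth process and the
boundary `b(t) = exp(h·e^{−βt} − (σ²−2α)/(2β))`. -/
theorem bcp_growth_constant_transformed_boundary
    {Ω : Type*} [MeasureSpace Ω] [IsProbabilityMeasure (ℙ : Measure Ω)]
    (α β σ x₀ : ℝ) (hα : 0 < α) (hβ : 0 < β) (hσ : 0 < σ) (hx₀ : 0 < x₀)
    (W : ℝ → Ω → ℝ) (hW : IsStandardBM W)
    (f : ℝ → ℝ → ℝ)
    (hf : ∀ t x : ℝ, f t x =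
      (Real.exp (β * t) / σ) * (Real.log x + (σ ^ 2 - 2 * α) / (2 * β)))
    (s : ℝ → ℝ)
    (hs : ∀ t : ℝ, s t = (Real.exp (2 * β * t) - 1) / (2 * β))
    (X : ℝ → Ω → ℝ)
    (hX : ∀ (t : ℝ) (ω : Ω), X t ω =
      Real.exp (σ * Real.exp (-β * t) * (f 0 x₀ + W (s t) ω) - (σ ^ 2 - 2 * α) / (2 * β)))
    (h : ℝ) (hh : Real.log x₀ + (σ ^ 2 - 2 * α) / (2 * β) < h)
    (T : ℝ) (hT : 0 < T) :
    (ℙ {ω : Ω | ∀ t ∈ Set.Icc (0 : ℝ) T,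
        X t ω < Real.exp (h * Real.exp (-β * t) - (σ ^ 2 - 2 * α) / (2 * β))}).toReal =
      2 * stdNormalCDF ((2 * β * (h - Real.log x₀) - σ ^ 2 + 2 * α) /
          (σ * Real.sqrt (2 * β * (Real.exp (2 * β * T) - 1)))) - 1 := by
  set c' : ℝ := (σ ^ 2 - 2 * α) / (2 * β) with hc'
  set L : ℝ := Real.log x₀ with hL
  set E : ℝ := Real.exp (2 * β * T) with hE
  have hE1 : 1 < E := by
    rw [hE, show (1:ℝ) = Real.exp 0 by rw [Real.exp_zero]]
    exact Real.exp_lt_exp.2 (by positivity)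
  set S' : ℝ := (E - 1) / (2 * β) with hS'def
  have hS' : 0 < S' := by rw [hS'def]; exact div_pos (by linarith) (by positivity)
  have hsT : s T = S' := by rw [hs]
  set a : ℝ := (h - L - c') / σ with hadef
  have ha : 0 < a := by
    rw [hadef]
    apply div_pos _ hσ
    linarith
  have hf0 : f 0 x₀ = (L + c') / σ := by
    rw [hf, mul_zero, Real.exp_zero]
    ring
  -- the event identification
  have hset : {ω : Ω | ∀ t ∈ Set.Icc (0 : ℝ) T,
        X t ω < Real.exp (h * Real.exp (-β * t) - c')}
      = {ω : Ω | ∀ u ∈ Icc (0:ℝ) S', W u ω < a} := by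
    have hsfun : s = fun t => (Real.exp (2 * β * t) - 1) / (2 * β) := funext hs
    have hscont : Continuous s := by
      rw [hsfun]
      exact ((Real.continuous_exp.comp (continuous_const.mul continuous_id)).sub
        continuous_const).div_const _
    have hsmono : ∀ t t', t ≤ t' → s t ≤ s t' := by
      intro t t' htt
      rw [hs, hs]
      have hle : Real.exp (2 * β * t) ≤ Real.exp (2 * β * t') :=
        Real.exp_le_exp.2 (by nlinarith)
      have h2β : (0:ℝ) < 2 * β := by positivity
      exact (div_le_div_iff_of_pos_right h2β).2 (by linarith)
    have hs0 : s 0 = 0 := by rw [hs]; simp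
    have hiff : ∀ (t : ℝ) (ω : Ω),
        (X t ω < Real.exp (h * Real.exp (-β * t) - c')) ↔ W (s t) ω < a := by
      intro t ω
      rw [hX, Real.exp_lt_exp, hf0]
      have hEt : 0 < Real.exp (-β * t) := Real.exp_pos _
      constructor
      · intro h1
        have h2 : σ * ((L + c') / σ + W (s t) ω) < h := by
          have h3 : (σ * ((L + c') / σ + W (s t) ω)) * Real.exp (-β * t)
              < h * Real.exp (-β * t) := by ring_nf; ring_nf at h1; linarith
          exact lt_of_mul_lt_mul_right (by linarith [h3]) hEt.le
        rw [hadef]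
        rw [lt_div_iff₀ hσ]
        have h4 : σ * ((L + c') / σ) = L + c' := by field_simp
        nlinarith [h4]
      · intro h1
        have h2 : σ * ((L + c') / σ + W (s t) ω) < h := by
          have h4 : σ * ((L + c') / σ) = L + c' := by field_simp
          rw [hadef, lt_div_iff₀ hσ] at h1
          nlinarith [h4]
        have h3 : (σ * ((L + c') / σ + W (s t) ω)) * Real.exp (-β * t)
            < h * Real.exp (-β * t) := by
          exact mul_lt_mul_of_pos_right h2 hEt
        ring_nf; ring_nf at h3; linarith
    ext ω
    simp only [mem_setOf_eq]
    constructor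
    · intro hω u hu
      have himg : u ∈ s '' (Icc 0 T) := by
        have := intermediate_value_Icc hT.le hscont.continuousOn
        apply this
        rw [hs0, hsT]
        exact hu
      obtain ⟨t, ht, hst⟩ := himg
      rw [← hst]
      exact (hiff t ω).1 (hω t ht)
    · intro hω t ht
      refine (hiff t ω).2 ?_
      apply hω
      constructor
      · rw [← hs0]; exact hsmono 0 t ht.1
      · rw [← hsT]; exact hsmono t T ht.2
  rw [hset, BMaux.sup_lt_prob hW hS' ha]
  -- now the numeric identity
  set z : ℝ := a / Real.sqrt S' with hzdef
  set P : ℝ≥0∞ := gaussianReal 0 1 (Iic z) with hPdef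
  have hP1 : P ≤ 1 := prob_le_one
  have hPIic : gaussianReal 0 (Real.toNNReal S') (Iic a) = P := gauss_scale_Iic hS' a
  have hz0 : 0 ≤ z := by
    rw [hzdef]
    positivity
  have hP2 : 1 ≤ 2 * P := by
    have hhalf : gaussianReal 0 1 (Ioi (0:ℝ)) ≤ P := by
      have e1 : gaussianReal 0 1 (Ioi (0:ℝ)) ≤ gaussianReal 0 1 (Ici (0:ℝ)) :=
        measure_mono Ioi_subset_Ici_self
      have e2 : gaussianReal 0 1 (Ici (0:ℝ)) = gaussianReal 0 1 (Iic (0:ℝ)) := by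
        have := gauss_Ici_eq_Iic_neg 1 (0:ℝ)
        rwa [neg_zero] at this
      have e3 : gaussianReal 0 1 (Iic (0:ℝ)) ≤ P :=
        measure_mono (fun x hx => le_trans hx hz0)
      exact le_trans e1 (le_trans (le_of_eq e2) e3)
    have hhalf2 : gaussianReal 0 1 (Iic (0:ℝ)) ≤ P :=
      measure_mono (fun x hx => le_trans hx hz0)
    calc (1:ℝ≥0∞) = gaussianReal 0 1 (Ioi (0:ℝ)) + gaussianReal 0 1 (Iic (0:ℝ)) :=
          (gauss_Ioi_add_Iic 1 0).symm
      _ ≤ P + P := add_le_add hhalf hhalf2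
      _ = 2 * P := (two_mul P).symm
  have hIoi : gaussianReal 0 (Real.toNNReal S') (Ioi a) = 1 - P := by
    have := gauss_Ioi_add_Iic (Real.toNNReal S') a
    rw [hPIic] at this
    exact ENNReal.eq_sub_of_add_eq (ne_top_of_le_ne_top ENNReal.one_ne_top hP1) this
  rw [hIoi]
  have hPne : P ≠ ⊤ := ne_top_of_le_ne_top ENNReal.one_ne_top hP1
  have h2P : 2 * (1 - P) = 2 - 2 * P := by
    rw [ENNReal.mul_sub (fun _ _ => ENNReal.ofNat_ne_top), mul_one]
  have hle1 : 2 - 2 * P ≤ 1 := by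
    rw [tsub_le_iff_right]
    calc (2:ℝ≥0∞) = 1 + 1 := by norm_num
      _ ≤ 1 + 2 * P := add_le_add_right hP2 _
  have htoReal : (1 - 2 * (1 - P)).toReal = 2 * P.toReal - 1 := by
    rw [h2P]
    rw [ENNReal.toReal_sub_of_le hle1 ENNReal.one_ne_top]
    rw [ENNReal.toReal_sub_of_le (by
        calc 2 * P ≤ 2 * 1 := mul_le_mul_right hP1 2
          _ = 2 := mul_one 2) ENNReal.ofNat_ne_top]
    rw [ENNReal.toReal_mul]
    simp only [ENNReal.toReal_one, ENNReal.toReal_ofNat]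
    ring
  rw [htoReal]
  have hzval : z = (2 * β * (h - L) - σ ^ 2 + 2 * α) /
      (σ * Real.sqrt (2 * β * (E - 1))) := by
    set B : ℝ := Real.sqrt (2 * β) with hB
    set C : ℝ := Real.sqrt (E - 1) with hC
    have hBpos : 0 < B := Real.sqrt_pos.2 (by positivity)
    have hCpos : 0 < C := Real.sqrt_pos.2 (by linarith)
    have hB2 : B ^ 2 = 2 * β := Real.sq_sqrt (by positivity)
    have hC2 : C ^ 2 = E - 1 := Real.sq_sqrt (by linarith)
    have hsqrtS : Real.sqrt S' = C / B := by
      rw [show S' = (C / B) ^ 2 by rw [div_pow, hB2, hC2]]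
      exact Real.sqrt_sq (by positivity)
    have hsqrtprod : Real.sqrt (2 * β * (E - 1)) = B * C := by
      rw [show 2 * β * (E - 1) = (B * C) ^ 2 by rw [mul_pow, hB2, hC2]]
      exact Real.sqrt_sq (by positivity)
    rw [hzdef, hsqrtS, hsqrtprod, hadef, hc']
    rw [show (2:ℝ) * β = B ^ 2 from hB2.symm]
    field_simp
    ring
  have hPz : P.toReal = stdNormalCDF ((2 * β * (h - L) - σ ^ 2 + 2 * α) /
      (σ * Real.sqrt (2 * β * (E - 1)))) := by
    rw [hPdef, hzval]
    rfl
  rw [hPz]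
end
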